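/- arXiv:1301.3746 — 4 statements merged into one kernel-verified Lean document; each statement's English description precedes it below -/
import Mathlib

section
/- Suppose X is connected and locally path-connected. Then the space X̃ is connected and locally path-connected, and the map p : X̃ → X, p(⟨α⟩) = α(1), is a continuous open surjection. -/
open unitInterval

noncomputable section

/-- The homotopy class of a loop, as an element of the fundamental group. -/
def pathClass {X : Type*} [TopologicalSpace X] {x : X} (γ : Path x x) :
    FundamentalGroup X x :=
  FundamentalGroup.fromPath (X := TopCat.of X) (Quotient.mk (Path.Homotopic.setoid x x) γ)

/-- A continuous path in `X` starting at the basepoint `x`. -/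
structure RawPath (X : Type*) [TopologicalSpace X] (x : X) where
  toFun : C(unitInterval, X)
  source : toFun 0 = x

variable {X : Type*} [TopologicalSpace X] {x : X}

/-- The endpoint `α(1)` of a path starting at the basepoint. -/
def RawPath.endpt (α : RawPath X x) : X := α.toFun 1

/-- A raw path, as a bundled `Path` from `x` to its endpoint. -/
def RawPath.path (α : RawPath X x) : Path x α.endpt := ⟨α.toFun, α.source, rfl⟩

/-- The relation `α ∼ β` iff `α(1) = β(1)` and `[α · β⁻] ∈ H`. -/
def SpanierRel (H : Subgroup (FundamentalGroup X x)) (α β : RawPath X x) : Prop :=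
  ∃ hend : α.endpt = β.endpt,
    pathClass (α.path.trans (β.path.symm.cast hend rfl)) ∈ H

/-- The space `X̃`: paths starting at `x`, modulo `α ∼ β` iff `α(1) = β(1)`
and `[α · β⁻] ∈ H`. -/
def SpanierSpace (H : Subgroup (FundamentalGroup X x)) : Type _ :=
  Quot (SpanierRel H)

/-- The equivalence class `⟨α⟩ ∈ X̃` of a path `α` starting at `x`. -/
def SpanierSpace.mk (H : Subgroup (FundamentalGroup X x)) (α : RawPath X x) :
    SpanierSpace H :=
  Quot.mk _ α

/-- The endpoint projection `p : X̃ → X`, `p ⟨α⟩ = α(1)`. -/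
def spanierProj (H : Subgroup (FundamentalGroup X x)) : SpanierSpace H → X :=
  Quot.lift RawPath.endpt (fun _ _ hab => by obtain ⟨h, -⟩ := hab; exact h)

/-- The concatenation `α · γ` of a path `α` starting at `x` with a path `γ`
starting at `α(1)`. -/
def RawPath.extend (α : RawPath X x) {y : X} (γ : Path α.endpt y) : RawPath X x :=
  ⟨(α.path.trans γ).toContinuousMap, (α.path.trans γ).source'⟩

/-- The basic set `⟨α,U⟩ = {⟨α·γ⟩ : γ a continuous path in U with γ(0) = α(1)}`. -/
def basicSet (H : Subgroup (FundamentalGroup X x)) (α : RawPath X x) (U : Set X) :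
    Set (SpanierSpace H) :=
  {z | ∃ (y : X) (γ : Path α.endpt y), Set.range γ ⊆ U ∧ z = SpanierSpace.mk H (α.extend γ)}

/-- The topology on `X̃` generated by the basic sets `⟨α,U⟩` with `U` open
and `α(1) ∈ U`. -/
instance spanierTopology (H : Subgroup (FundamentalGroup X x)) :
    TopologicalSpace (SpanierSpace H) :=
  TopologicalSpace.generateFrom
    {S | ∃ (α : RawPath X x) (U : Set X), IsOpen U ∧ α.endpt ∈ U ∧ S = basicSet H α U}

/-- The subgroup-like subset `π(α,U) = [α]·i_#(π₁(U,α(1)))·[α]⁻¹` of `π₁(X,x)`: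
all classes `[α·γ·α⁻]` with `γ` a loop at `α(1)` inside `U`. -/
def piSet (α : RawPath X x) (U : Set X) : Set (FundamentalGroup X x) :=
  {g | ∃ γ : Path α.endpt α.endpt, Set.range γ ⊆ U ∧
    g = pathClass (α.path.trans (γ.trans α.path.symm))}

end

section
open unitInterval CategoryTheory
variable {X : Type*} [TopologicalSpace X] {x : X}
attribute [local instance] Path.Homotopic.setoid

namespace SpanierAux

theorem homotopic_symm₂ {a b : X} {p q : Path a b} (h : p.Homotopic q) :
    p.symm.Homotopic q.symm := Nonempty.map Path.Homotopy.symm₂ h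

theorem ht_assoc {a b c d : X} (p : Path a b) (q : Path b c) (r : Path c d) :
    ((p.trans q).trans r).Homotopic (p.trans (q.trans r)) := ⟨Path.Homotopy.transAssoc p q r⟩

theorem ht_reflTrans {a b : X} (p : Path a b) : ((Path.refl a).trans p).Homotopic p :=
  ⟨Path.Homotopy.reflTrans p⟩

theorem ht_transRefl {a b : X} (p : Path a b) : (p.trans (Path.refl b)).Homotopic p :=
  ⟨Path.Homotopy.transRefl p⟩

theorem ht_transSymm {a b : X} (p : Path a b) : (p.trans p.symm).Homotopic (Path.refl a) :=
  ⟨(Path.Homotopy.reflTransSymm p).symm⟩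

theorem ht_symmTrans {a b : X} (p : Path a b) : (p.symm.trans p).Homotopic (Path.refl b) :=
  ⟨(Path.Homotopy.reflSymmTrans p).symm⟩

/-- The "difference" class `[p · q⁻¹] ∈ π₁(X,x)` of two paths with the same endpoints. -/
noncomputable def pdiff {y : X} (p q : Path x y) : FundamentalGroup X x := pathClass (p.trans q.symm)

theorem pathClass_congr {p q : Path x x} (h : p.Homotopic q) : pathClass p = pathClass q :=
  congrArg (FundamentalGroup.fromPath (X := TopCat.of X)) (Quotient.sound h)

theorem pdiff_homotopic {y : X} {p p' q q' : Path x y} (hp : p.Homotopic p')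
    (hq : q.Homotopic q') : pdiff p q = pdiff p' q' :=
  pathClass_congr (hp.hcomp (homotopic_symm₂ hq))

theorem pdiff_congr {y : X} {p p' q q' : Path x y} (hp : ⇑p = ⇑p') (hq : ⇑q = ⇑q') :
    pdiff p q = pdiff p' q' := by
  obtain rfl : p = p' := by ext t; exact congrFun hp t
  obtain rfl : q = q' := by ext t; exact congrFun hq t
  rfl

theorem pdiff_self {y : X} (p : Path x y) : pdiff p p = 1 := by
  show (⟦p.trans p.symm⟧ : Path.Homotopic.Quotient x x) = ⟦Path.refl x⟧
  exact Quotient.sound (ht_transSymm p)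

theorem pdiff_mul {y : X} (p q r : Path x y) : pdiff p r = pdiff q r * pdiff p q := by
  show (⟦p.trans r.symm⟧ : Path.Homotopic.Quotient x x) =
    ⟦(p.trans q.symm).trans (q.trans r.symm)⟧
  have h : ((p.trans q.symm).trans (q.trans r.symm)).Homotopic (p.trans r.symm) := by
    refine (ht_assoc _ _ _).trans ((Path.Homotopic.refl p).hcomp ?_)
    refine ((ht_assoc q.symm q r.symm).symm.trans ?_)
    exact ((ht_symmTrans q).hcomp (Path.Homotopic.refl r.symm)).trans (ht_reflTrans r.symm)
  exact Quotient.sound h.symm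

theorem pdiff_inv {y : X} (p q : Path x y) : pdiff q p = (pdiff p q)⁻¹ :=
  eq_inv_of_mul_eq_one_left (by rw [← pdiff_mul, pdiff_self])

theorem pdiff_trans_right {y z : X} (p q : Path x y) (δ : Path y z) :
    pdiff (p.trans δ) (q.trans δ) = pdiff p q := by
  apply pathClass_congr
  rw [Path.trans_symm]
  refine (ht_assoc _ _ _).trans ((Path.Homotopic.refl p).hcomp ?_)
  refine (ht_assoc δ δ.symm q.symm).symm.trans ?_
  exact ((ht_transSymm δ).hcomp (Path.Homotopic.refl q.symm)).trans (ht_reflTrans q.symm)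

end SpanierAux
end
namespace SpanierAux
section
open unitInterval CategoryTheory
variable {X : Type*} [TopologicalSpace X] {x : X} {H : Subgroup (FundamentalGroup X x)}
attribute [local instance] Path.Homotopic.setoid

theorem cast_rfl_rfl {a b : X} (p : Path a b) : p.cast rfl rfl = p := by ext t; simp

theorem trans_coe_congr {a b b' c c' : X} {p : Path a b} {p' : Path a b'} {q : Path b c}
    {q' : Path b' c'} (hp : ∀ t, p t = p' t) (hq : ∀ t, q t = q' t) :
    ∀ t, (p.trans q) t = (p'.trans q') t := by
  intro t
  rw [Path.trans_apply, Path.trans_apply]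
  split_ifs <;> simp [hp, hq]

theorem spanierRel_of_pdiff {α β : RawPath X x} {y : X} (hα : y = α.endpt) (hβ : y = β.endpt)
    (h : pdiff (α.path.cast rfl hα) (β.path.cast rfl hβ) ∈ H) : SpanierRel H α β := by
  subst hα
  refine ⟨hβ, ?_⟩
  show pdiff α.path (β.path.cast rfl hβ) ∈ H
  rwa [cast_rfl_rfl] at h

theorem rel_pdiff_mem {α β : RawPath X x} (h : SpanierRel H α β) {y : X}
    (hα : y = α.endpt) (hβ : y = β.endpt) :
    pdiff (α.path.cast rfl hα) (β.path.cast rfl hβ) ∈ H := by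
  subst hα
  obtain ⟨hend, hmem⟩ := h
  rw [cast_rfl_rfl]
  exact hmem

theorem spanierRel_refl (α : RawPath X x) : SpanierRel H α α :=
  spanierRel_of_pdiff rfl rfl (by rw [pdiff_self]; exact H.one_mem)

theorem spanierRel_symm {α β : RawPath X x} (h : SpanierRel H α β) : SpanierRel H β α := by
  obtain ⟨hend, -⟩ := id h
  refine spanierRel_of_pdiff hend rfl ?_
  rw [pdiff_inv]
  exact H.inv_mem (rel_pdiff_mem h rfl hend)

theorem spanierRel_trans {α β γ : RawPath X x} (h1 : SpanierRel H α β)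
    (h2 : SpanierRel H β γ) : SpanierRel H α γ := by
  obtain ⟨e1, -⟩ := id h1; obtain ⟨e2, -⟩ := id h2
  refine spanierRel_of_pdiff rfl (e1.trans e2) ?_
  rw [pdiff_mul (q := β.path.cast rfl e1)]
  exact H.mul_mem (rel_pdiff_mem h2 e1 (e1.trans e2)) (rel_pdiff_mem h1 rfl e1)

theorem spanierRel_equivalence : Equivalence (SpanierRel H) :=
  ⟨spanierRel_refl, spanierRel_symm, spanierRel_trans⟩

theorem mk_eq_iff {α β : RawPath X x} :
    SpanierSpace.mk H α = SpanierSpace.mk H β ↔ SpanierRel H α β := by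
  show @Eq (Quot (SpanierRel H)) (Quot.mk _ α) (Quot.mk _ β) ↔ _
  rw [Quot.eq]
  exact (spanierRel_equivalence (H := H)).eqvGen_iff

theorem rawPath_ext {α β : RawPath X x} (h : ∀ t, α.toFun t = β.toFun t) : α = β := by
  cases α; cases β
  simp only [RawPath.mk.injEq]
  exact ContinuousMap.ext h

theorem extend_endpt (α : RawPath X x) {y : X} (γ : Path α.endpt y) :
    (α.extend γ).endpt = y := (α.path.trans γ).target

theorem extend_path_apply (α : RawPath X x) {y : X} (γ : Path α.endpt y) (t : I) :
    (α.extend γ).path t = (α.path.trans γ) t := rfl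

theorem spanierRel_extend {α β : RawPath X x} (h : SpanierRel H α β) {y z : X}
    (hα : α.endpt = y) (hβ : β.endpt = y) (δ : Path y z) :
    SpanierRel H (α.extend (δ.cast hα rfl)) (β.extend (δ.cast hβ rfl)) := by
  refine spanierRel_of_pdiff (extend_endpt _ _).symm (extend_endpt _ _).symm ?_
  have key : pdiff ((α.path.cast rfl hα.symm).trans δ) ((β.path.cast rfl hβ.symm).trans δ)
      ∈ H := by
    rw [pdiff_trans_right]
    exact rel_pdiff_mem h hα.symm hβ.symm
  convert key using 1
  exact pdiff_congr rfl rfl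

theorem spanierRel_extend_homotopic (α : RawPath X x) {y : X} {γ₁ γ₂ : Path α.endpt y}
    (h : γ₁.Homotopic γ₂) : SpanierRel H (α.extend γ₁) (α.extend γ₂) := by
  refine spanierRel_of_pdiff (extend_endpt _ _).symm (extend_endpt _ _).symm ?_
  have : pdiff (α.path.trans γ₁) (α.path.trans γ₂) = 1 := by
    rw [pdiff_homotopic (Path.Homotopic.refl _) ((Path.Homotopic.refl α.path).hcomp h.symm),
      pdiff_self]
  rw [show pdiff (((α.extend γ₁).path).cast rfl (extend_endpt _ _).symm)
      (((α.extend γ₂).path).cast rfl (extend_endpt _ _).symm)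
      = pdiff (α.path.trans γ₁) (α.path.trans γ₂) from pdiff_congr rfl rfl, this]
  exact H.one_mem

theorem spanierRel_assoc (α : RawPath X x) {y z : X} (γ : Path α.endpt y) (δ : Path y z) :
    SpanierRel H ((α.extend γ).extend (δ.cast (extend_endpt α γ) rfl))
      (α.extend (γ.trans δ)) := by
  refine spanierRel_of_pdiff (extend_endpt _ _).symm (extend_endpt _ _).symm ?_
  have h1 : pdiff ((α.path.trans γ).trans δ) (α.path.trans (γ.trans δ)) = 1 := by
    rw [pdiff_homotopic (ht_assoc _ _ _) (Path.Homotopic.refl _), pdiff_self]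
  rw [show pdiff ((((α.extend γ).extend (δ.cast (extend_endpt α γ) rfl)).path).cast rfl
        (extend_endpt _ _).symm) (((α.extend (γ.trans δ)).path).cast rfl (extend_endpt _ _).symm)
      = pdiff ((α.path.trans γ).trans δ) (α.path.trans (γ.trans δ)) from
    pdiff_congr (by
      funext t
      exact trans_coe_congr (p' := α.path.trans γ) (q' := δ)
        (fun t => rfl) (fun t => rfl) t) rfl, h1]
  exact H.one_mem

end
end SpanierAux
namespace SpanierAux
section
open unitInterval Set
variable {X : Type*} [TopologicalSpace X] {x : X} {H : Subgroup (FundamentalGroup X x)}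
attribute [local instance] Path.Homotopic.setoid

/-- Two paths tracing `γ.extend` along parameter functions with equal endpoints
are homotopic (straight-line homotopy in the parameter). -/
theorem homotopic_of_extend {a b c d : X} (γ : Path a b) (p q : Path c d) (f g : I → ℝ)
    (hf : Continuous f) (hg : Continuous g) (h0 : f 0 = g 0) (h1 : f 1 = g 1)
    (hp : ∀ t, p t = γ.extend (f t)) (hq : ∀ t, q t = γ.extend (g t)) : p.Homotopic q := by
  refine ⟨⟨⟨⟨fun z => γ.extend ((1 - (z.1 : ℝ)) * f z.2 + (z.1 : ℝ) * g z.2), ?_⟩, ?_, ?_⟩, ?_⟩⟩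
  · exact γ.continuous_extend.comp <| by fun_prop
  · intro u; simp [hp u]
  · intro u; simp [hq u]
  · intro t u hu
    rcases hu with rfl | rfl
    · have e : (1 - (t : ℝ)) * f 0 + (t : ℝ) * g 0 = f 0 := by rw [← h0]; ring
      show γ.extend _ = p 0
      rw [e, ← hp 0]
    · have e : (1 - (t : ℝ)) * f 1 + (t : ℝ) * g 1 = f 1 := by rw [← h1]; ring
      show γ.extend _ = p 1
      rw [e, ← hp 1]

/-- Linear segment along `γ` from `γ s₀` to `γ s`. -/
noncomputable def seg {a b : X} (γ : Path a b) (s₀ s : I) : Path (γ s₀) (γ s) where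
  toFun u := γ.extend ((1 - (u : ℝ)) * s₀ + (u : ℝ) * s)
  continuous_toFun := γ.continuous_extend.comp <| by fun_prop
  source' := by simp [γ.extend_extends']
  target' := by simp [γ.extend_extends']

theorem seg_apply {a b : X} (γ : Path a b) (s₀ s : I) (u : I) :
    seg γ s₀ s u = γ.extend ((1 - (u : ℝ)) * s₀ + (u : ℝ) * s) := rfl

/-- Truncation of `γ` to `[0,s]`, as a path from `a` to `γ s`. -/
noncomputable def trunc {a b : X} (γ : Path a b) (s : I) : Path a (γ s) :=
  (γ.truncate 0 (s : ℝ)).cast (by rw [min_eq_left s.2.1, γ.extend_zero])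
    (γ.extend_extends' s).symm

theorem trunc_apply {a b : X} (γ : Path a b) (s u : I) :
    trunc γ s u = γ.extend (min (max (u : ℝ) 0) s) := rfl

theorem trunc_range {a b : X} (γ : Path a b) (s : I) : range (trunc γ s) ⊆ range γ := by
  rintro - ⟨u, rfl⟩
  rw [trunc_apply]
  exact γ.extend_range ▸ mem_range_self _

theorem seg_range_subset {a b : X} (γ : Path a b) (s₀ s : I) {W : Set X}
    (h : ∀ t : I, dist t s₀ ≤ dist s s₀ → γ t ∈ W) : range (seg γ s₀ s) ⊆ W := by
  rintro - ⟨u, rfl⟩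
  rw [seg_apply]
  set r : ℝ := (1 - (u : ℝ)) * s₀ + (u : ℝ) * s with hr
  have hu0 : (0:ℝ) ≤ u := u.2.1
  have hu1 : (u:ℝ) ≤ 1 := u.2.2
  have hs00 : (0:ℝ) ≤ s₀ := s₀.2.1; have hs01 : (s₀:ℝ) ≤ 1 := s₀.2.2
  have hs0 : (0:ℝ) ≤ s := s.2.1; have hs1 : (s:ℝ) ≤ 1 := s.2.2
  have hr0 : 0 ≤ r := by nlinarith
  have hr1 : r ≤ 1 := by nlinarith
  have : γ.extend r = γ ⟨r, hr0, hr1⟩ := γ.extend_extends' ⟨r, hr0, hr1⟩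
  rw [this]
  apply h
  have : dist (⟨r, hr0, hr1⟩ : I) s₀ = |r - (s₀:ℝ)| := rfl
  rw [Subtype.dist_eq, Subtype.dist_eq, Real.dist_eq, Real.dist_eq]
  have : r - (s₀:ℝ) = (u:ℝ) * ((s:ℝ) - s₀) := by rw [hr]; ring
  rw [this, abs_mul, abs_of_nonneg hu0]
  nlinarith [abs_nonneg ((s:ℝ) - s₀)]

theorem trunc_trans_seg_homotopic {a b : X} (γ : Path a b) (s₀ s : I) :
    ((trunc γ s₀).trans (seg γ s₀ s)).Homotopic (trunc γ s) := by
  have hs00 : (0:ℝ) ≤ s₀ := s₀.2.1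
  have hs01 : (s₀:ℝ) ≤ 1 := s₀.2.2
  have hs0 : (0:ℝ) ≤ s := s.2.1
  have hs1 : (s:ℝ) ≤ 1 := s.2.2
  refine homotopic_of_extend γ _ _
    (fun u => if (u:ℝ) ≤ 1/2 then min (max (2*(u:ℝ)) 0) s₀
      else (1 - (2*(u:ℝ) - 1)) * s₀ + (2*(u:ℝ) - 1) * s)
    (fun u => min (max (u:ℝ) 0) s) ?_ ?_ ?_ ?_ ?_ ?_
  · apply Continuous.if_le
    · fun_prop
    · fun_prop
    · fun_prop
    · fun_prop
    · intro u hu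
      rw [hu]
      norm_num
      exact hs01
  · fun_prop
  · norm_num
    rw [min_eq_left hs00, min_eq_left hs0]
  · norm_num
    exact hs1
  · intro t
    rw [Path.trans_apply]
    split_ifs with h
    · rfl
    · rfl
  · intro t
    rw [trunc_apply]

end
end SpanierAux
namespace SpanierAux
section
open unitInterval Set
variable {X : Type*} [TopologicalSpace X] {x : X} {H : Subgroup (FundamentalGroup X x)}
attribute [local instance] Path.Homotopic.setoid

theorem mem_basicSet_self {α : RawPath X x} {U : Set X} (hU : α.endpt ∈ U) :
    SpanierSpace.mk H α ∈ basicSet H α U := by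
  refine ⟨α.endpt, Path.refl α.endpt, ?_, ?_⟩
  · rw [Path.refl_range]; exact singleton_subset_iff.mpr hU
  · rw [SpanierSpace.mk, SpanierSpace.mk]
    apply Quot.sound
    refine spanierRel_of_pdiff rfl ((extend_endpt _ _).symm) ?_
    rw [show pdiff (α.path.cast rfl rfl)
        (((α.extend (Path.refl α.endpt)).path).cast rfl (extend_endpt _ _).symm)
        = pdiff α.path (α.path.trans (Path.refl α.endpt)) from
      pdiff_congr (by funext t; simp) rfl]
    rw [pdiff_homotopic (Path.Homotopic.refl _) (ht_transRefl _), pdiff_self]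
    exact H.one_mem

theorem proj_mk (α : RawPath X x) : spanierProj H (SpanierSpace.mk H α) = α.endpt := rfl

theorem basicSet_subset_preimage {α : RawPath X x} {U : Set X} :
    basicSet H α U ⊆ spanierProj H ⁻¹' U := by
  rintro - ⟨y, γ, hγ, rfl⟩
  show (α.extend γ).endpt ∈ U
  rw [extend_endpt]
  exact hγ (by exact ⟨1, γ.target⟩)

theorem basicSet_mono {α : RawPath X x} {U V : Set X} (h : U ⊆ V) :
    basicSet H α U ⊆ basicSet H α V := by
  rintro - ⟨y, γ, hγ, rfl⟩
  exact ⟨y, γ, hγ.trans h, rfl⟩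

theorem basicSet_subset {α β : RawPath X x} {U : Set X}
    (h : SpanierSpace.mk H β ∈ basicSet H α U) : basicSet H β U ⊆ basicSet H α U := by
  obtain ⟨y, γ, hγU, hmk⟩ := h
  rintro - ⟨w, δ, hδU, rfl⟩
  have hrel : SpanierRel H β (α.extend γ) := mk_eq_iff.mp hmk
  obtain ⟨hend, -⟩ := id hrel
  have e : (α.extend γ).endpt = y := extend_endpt α γ
  -- δ' : Path y w
  set δ' : Path y w := δ.cast (hend.trans e).symm rfl with hδ'
  have h1 : SpanierRel H (β.extend (δ'.cast (hend.trans e) rfl))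
      ((α.extend γ).extend (δ'.cast e rfl)) := spanierRel_extend hrel (hend.trans e) e δ'
  have h2 : SpanierRel H ((α.extend γ).extend (δ'.cast e rfl)) (α.extend (γ.trans δ')) := by
    have := spanierRel_assoc (H := H) α γ δ'
    convert this using 3
  have hδeq : δ'.cast (hend.trans e) rfl = δ := by ext t; simp [hδ']
  rw [hδeq] at h1
  refine ⟨w, γ.trans δ', ?_, ?_⟩
  · rw [Path.trans_range]
    refine union_subset hγU ?_
    rw [show range δ' = range δ by rw [hδ']; exact congrArg range (Path.cast_coe δ _ _)]
    exact hδU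
  · exact (Quot.sound (spanierRel_trans h1 h2) : SpanierSpace.mk H _ = _)

end
end SpanierAux
namespace SpanierAux
section
open unitInterval Set
variable {X : Type*} [TopologicalSpace X] {x : X} {H : Subgroup (FundamentalGroup X x)}
attribute [local instance] Path.Homotopic.setoid

theorem spanierRel_extend_refl (α : RawPath X x) :
    SpanierRel H α (α.extend (Path.refl α.endpt)) := by
  refine spanierRel_of_pdiff rfl ((extend_endpt _ _).symm) ?_
  rw [show pdiff (α.path.cast rfl rfl)
      (((α.extend (Path.refl α.endpt)).path).cast rfl (extend_endpt _ _).symm)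
      = pdiff α.path (α.path.trans (Path.refl α.endpt)) from
    pdiff_congr (by funext t; simp) rfl]
  rw [pdiff_homotopic (Path.Homotopic.refl _) (ht_transRefl _), pdiff_self]
  exact H.one_mem

theorem spanierRel_extend_pointwise_refl (α : RawPath X x) {c : X} (γ₀ : Path α.endpt c)
    (hc : ∀ t, γ₀ t = α.endpt) : SpanierRel H α (α.extend γ₀) := by
  have hc' : c = α.endpt := γ₀.target ▸ (hc 1)
  subst hc'
  have : γ₀ = Path.refl α.endpt := by ext t; exact hc t
  rw [this]
  exact spanierRel_extend_refl α

theorem spanierRel_trunc (α : RawPath X x) {b : X} (γ : Path α.endpt b) (s₀ s : I) :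
    SpanierRel H (α.extend (trunc γ s))
      ((α.extend (trunc γ s₀)).extend
        ((seg γ s₀ s).cast (extend_endpt α (trunc γ s₀)) rfl)) := by
  refine spanierRel_symm (spanierRel_trans (spanierRel_assoc α (trunc γ s₀) (seg γ s₀ s)) ?_)
  exact spanierRel_extend_homotopic α (trunc_trans_seg_homotopic γ s₀ s)

theorem mk_extend_trunc_zero (α : RawPath X x) {b : X} (γ : Path α.endpt b) :
    SpanierSpace.mk H (α.extend (trunc γ 0)) = SpanierSpace.mk H α := by
  refine (Quot.sound (spanierRel_extend_pointwise_refl α (trunc γ 0) ?_)).symm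
  intro t
  rw [trunc_apply]
  have : min (max (t:ℝ) 0) (((0:I)):ℝ) = 0 := min_eq_right (le_max_right _ _)
  rw [this, γ.extend_zero]

theorem mk_extend_trunc_one (α : RawPath X x) {b : X} (γ : Path α.endpt b) :
    SpanierSpace.mk H (α.extend (trunc γ 1)) = SpanierSpace.mk H (α.extend γ) := by
  apply congrArg
  apply rawPath_ext
  intro t
  show (α.path.trans (trunc γ 1)) t = (α.path.trans γ) t
  refine trans_coe_congr (p' := α.path) (q := trunc γ 1) (q' := γ) (fun t => rfl) (fun u => ?_) t
  rw [trunc_apply]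
  have : min (max (u:ℝ) 0) (((1:I)):ℝ) = (u:ℝ) := by
    rw [max_eq_left u.2.1]
    exact min_eq_left u.2.2
  rw [this]
  exact γ.extend_extends' u

/-- The path `s ↦ ⟨α · γ|[0,s]⟩` is continuous and stays in `⟨α, U⟩`. -/
theorem joinedIn_basicSet (α : RawPath X x) {b : X} (γ : Path α.endpt b) {U : Set X}
    (hγ : range γ ⊆ U) :
    JoinedIn (basicSet H α U) (SpanierSpace.mk H α) (SpanierSpace.mk H (α.extend γ)) := by
  have hmem : ∀ s : I, SpanierSpace.mk H (α.extend (trunc γ s)) ∈ basicSet H α U :=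
    fun s => ⟨γ s, trunc γ s, (trunc_range γ s).trans hγ, rfl⟩
  have hcont : Continuous fun s : I => SpanierSpace.mk H (α.extend (trunc γ s)) := by
    rw [continuous_generateFrom_iff]
    rintro - ⟨β, W, hW, hβW, rfl⟩
    rw [Metric.isOpen_iff]
    intro s₀ hs₀
    -- `Γ s₀ ∈ basicSet H β W`; its endpoint `γ s₀` lies in `W`.
    have hγs₀W : γ s₀ ∈ W := by
      have := basicSet_subset_preimage (H := H) (α := β) (U := W) hs₀
      rwa [mem_preimage, proj_mk, extend_endpt] at this
    have hnhds : γ ⁻¹' W ∈ nhds s₀ :=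
      γ.continuous.continuousAt.preimage_mem_nhds (hW.mem_nhds hγs₀W)
    obtain ⟨ε, hε, hball⟩ := Metric.mem_nhds_iff.mp hnhds
    refine ⟨ε, hε, ?_⟩
    intro s hs
    rw [Metric.mem_ball] at hs
    show SpanierSpace.mk H (α.extend (trunc γ s)) ∈ basicSet H β W
    refine basicSet_subset hs₀ ?_
    refine ⟨γ s, (seg γ s₀ s).cast (extend_endpt α (trunc γ s₀)) rfl, ?_, ?_⟩
    · rw [show range ((seg γ s₀ s).cast (extend_endpt α (trunc γ s₀)) rfl) = range (seg γ s₀ s)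
        from congrArg range (Path.cast_coe _ _ _)]
      refine seg_range_subset γ s₀ s ?_
      intro t ht
      exact hball (Metric.mem_ball.mpr (lt_of_le_of_lt ht hs))
    · exact Quot.sound (spanierRel_trunc α γ s₀ s)
  refine ⟨⟨⟨fun s => SpanierSpace.mk H (α.extend (trunc γ s)), hcont⟩, ?_, ?_⟩, ?_⟩
  · exact mk_extend_trunc_zero α γ
  · exact mk_extend_trunc_one α γ
  · intro t
    exact hmem t

end
end SpanierAux
namespace SpanierAux
section
open unitInterval Set
variable {X : Type*} [TopologicalSpace X] {x : X} {H : Subgroup (FundamentalGroup X x)}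
attribute [local instance] Path.Homotopic.setoid

theorem isBasis : TopologicalSpace.IsTopologicalBasis
    {S | ∃ (α : RawPath X x) (U : Set X), IsOpen U ∧ α.endpt ∈ U ∧ S = basicSet H α U} := by
  refine ⟨?_, ?_, rfl⟩
  · rintro - ⟨α, U, hU, hαU, rfl⟩ - ⟨α', U', hU', hα'U', rfl⟩ z ⟨hz1, hz2⟩
    obtain ⟨y, γ, hγ, rfl⟩ := hz1
    set β := α.extend γ with hβ
    have hβU : β.endpt ∈ U := by
      have := basicSet_subset_preimage (H := H) (α := α) (U := U)
        (⟨y, γ, hγ, rfl⟩ : SpanierSpace.mk H β ∈ basicSet H α U)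
      rwa [mem_preimage, proj_mk] at this
    have hβU' : β.endpt ∈ U' := by
      have := basicSet_subset_preimage (H := H) (α := α') (U := U') hz2
      rwa [mem_preimage, proj_mk] at this
    refine ⟨basicSet H β (U ∩ U'), ⟨β, U ∩ U', hU.inter hU', ⟨hβU, hβU'⟩, rfl⟩,
      mem_basicSet_self ⟨hβU, hβU'⟩, subset_inter ?_ ?_⟩
    · exact (basicSet_mono inter_subset_left).trans (basicSet_subset ⟨y, γ, hγ, rfl⟩)
    · exact (basicSet_mono inter_subset_right).trans (basicSet_subset hz2)
  · rw [sUnion_eq_univ_iff]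
    intro z
    obtain ⟨β, rfl⟩ := Quot.exists_rep z
    exact ⟨basicSet H β univ, ⟨β, univ, isOpen_univ, trivial, rfl⟩,
      mem_basicSet_self trivial⟩

theorem isPathConnected_basicSet {α : RawPath X x} {U : Set X} (hαU : α.endpt ∈ U) :
    IsPathConnected (basicSet H α U) := by
  refine ⟨SpanierSpace.mk H α, mem_basicSet_self hαU, ?_⟩
  rintro - ⟨y, γ, hγ, rfl⟩
  exact joinedIn_basicSet α γ hγ

theorem image_basicSet (α : RawPath X x) (U : Set X) :
    spanierProj H '' basicSet H α U = pathComponentIn U α.endpt := by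
  ext w
  constructor
  · rintro ⟨-, ⟨y, γ, hγ, rfl⟩, rfl⟩
    rw [proj_mk, extend_endpt]
    exact ⟨γ, fun t => hγ (mem_range_self t)⟩
  · rintro ⟨γ, hγt⟩
    refine ⟨SpanierSpace.mk H (α.extend γ), ⟨w, γ, ?_, rfl⟩, by rw [proj_mk, extend_endpt]⟩
    rintro - ⟨t, rfl⟩
    exact hγt t

end
end SpanierAux

open SpanierAux unitInterval Set

/-- If `X` is connected and locally path-connected, then `X̃` is connected and
locally path-connected, and `p : X̃ → X` is a continuous open surjection. -/
theorem spanierSpace_connected_locPathConnected_proj_continuous_open_surjective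
    {X : Type*} [TopologicalSpace X] [ConnectedSpace X] [LocallyPathConnectedSpace X]
    {x : X} (H : Subgroup (FundamentalGroup X x)) :
    ConnectedSpace (SpanierSpace H) ∧ LocallyPathConnectedSpace (SpanierSpace H) ∧
      Continuous (spanierProj H) ∧ IsOpenMap (spanierProj H) ∧
      Function.Surjective (spanierProj H) := by
  have hPC : PathConnectedSpace X := pathConnectedSpace_iff_connectedSpace.mpr ‹_›
  -- the constant raw path at `x`
  let cx : RawPath X x := ⟨ContinuousMap.const I x, rfl⟩
  have hjoin : ∀ z : SpanierSpace H, Joined (SpanierSpace.mk H cx) z := by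
    intro z
    obtain ⟨β, rfl⟩ := Quot.exists_rep z
    have h1 : Joined (SpanierSpace.mk H cx) (SpanierSpace.mk H (cx.extend β.path)) :=
      (joinedIn_basicSet cx β.path (subset_univ _)).joined
    have h2 : SpanierSpace.mk H (cx.extend β.path) = Quot.mk _ β := by
      apply Quot.sound
      refine spanierRel_of_pdiff (extend_endpt cx β.path).symm rfl ?_
      rw [show pdiff (((cx.extend β.path).path).cast rfl (extend_endpt cx β.path).symm)
          (β.path.cast rfl rfl)
          = pdiff ((Path.refl x).trans β.path) β.path from
        pdiff_congr (by
          funext t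
          exact trans_coe_congr (p' := Path.refl x) (q' := β.path)
            (fun t => rfl) (fun t => rfl) t) rfl]
      rw [pdiff_homotopic (ht_reflTrans β.path) (Path.Homotopic.refl β.path), pdiff_self]
      exact H.one_mem
    rwa [h2] at h1
  have hPCS : PathConnectedSpace (SpanierSpace H) :=
    ⟨⟨SpanierSpace.mk H cx⟩, fun z w => (hjoin z).symm.trans (hjoin w)⟩
  refine ⟨?_, ?_, ?_, ?_, ?_⟩
  · exact @PathConnectedSpace.connectedSpace _ _ hPCS
  · refine ⟨fun z => Filter.hasBasis_self.mpr ?_⟩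
    intro N hN
    obtain ⟨O, hON, hO, hzO⟩ := mem_nhds_iff.mp hN
    obtain ⟨S, hSb, hzS, hSO⟩ := isBasis.exists_subset_of_mem_open hzO hO
    obtain ⟨β, V, hV, hβV, rfl⟩ := hSb
    refine ⟨basicSet H β V, ?_, isPathConnected_basicSet hβV, hSO.trans hON⟩
    exact (isBasis.isOpen ⟨β, V, hV, hβV, rfl⟩).mem_nhds hzS
  · rw [continuous_def]
    intro U hU
    rw [isOpen_iff_forall_mem_open]
    intro z hz
    obtain ⟨β, rfl⟩ := Quot.exists_rep z
    have hβU : β.endpt ∈ U := hz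
    exact ⟨basicSet H β U, basicSet_subset_preimage,
      isBasis.isOpen ⟨β, U, hU, hβU, rfl⟩, mem_basicSet_self hβU⟩
  · intro O hO
    rw [isOpen_iff_forall_mem_open]
    rintro - ⟨z, hzO, rfl⟩
    obtain ⟨S, hSb, hzS, hSO⟩ := isBasis.exists_subset_of_mem_open hzO hO
    obtain ⟨β, V, hV, hβV, rfl⟩ := hSb
    refine ⟨spanierProj H '' basicSet H β V, image_mono hSO, ?_, mem_image_of_mem _ hzS⟩
    rw [image_basicSet]
    exact hV.pathComponentIn _
  · intro y
    let J : Path x y := PathConnectedSpace.somePath x y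
    exact ⟨SpanierSpace.mk H ⟨J.toContinuousMap, J.source⟩, J.target⟩
end

section
/- Let U ⊆ X be open and let ⟨α⟩, ⟨β⟩ ∈ X̃ with α(1) ∈ U and β(1) ∈ U. Then the sets ⟨α,U⟩ and ⟨β,U⟩ are either disjoint or identical. Moreover, if U is a path-connected open neighborhood of a point u ∈ X, then p⁻¹(U) = ⋃ { ⟨α,U⟩ : ⟨α⟩ ∈ p⁻¹(u) }. -/
open unitInterval

section Helpers

open CategoryTheory
attribute [local instance] Path.Homotopic.setoid

variable {X : Type*} [TopologicalSpace X] {x : X} {H : Subgroup (FundamentalGroup X x)}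

/-- A path homotopy class as a morphism in the fundamental groupoid. -/
abbrev hq {a b : X} (p : Path a b) : FundamentalGroupoid.mk a ⟶ FundamentalGroupoid.mk b := ⟦p⟧

lemma hq_trans {a b c : X} (p : Path a b) (q : Path b c) : hq (p.trans q) = hq p ≫ hq q :=
  Path.Homotopic.Quotient.mk_trans p q

lemma hq_symm {a b : X} (p : Path a b) : hq p.symm = Groupoid.inv (hq p) := rfl

lemma hq_congr {a b : X} {p q : Path a b} (h : p.Homotopic q) : hq p = hq q :=
  Quotient.sound h

lemma cast_self_eq {a b : X} (p : Path a b) (h1 : a = a) (h2 : b = b) : p.cast h1 h2 = p := rfl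

lemma pathClass_hom (p : Path x x) :
    pathClass p = hq p := rfl

lemma pathClass_congr {p q : Path x x} (h : p.Homotopic q) : pathClass p = pathClass q :=
  hq_congr h

lemma pathClass_eq_one_of_homotopic {a : X} {p q : Path x a} (h : p.Homotopic q) :
    pathClass (p.trans q.symm) = 1 := by
  show hq (p.trans q.symm) = 𝟙 _
  rw [hq_trans, hq_symm, hq_congr h]
  simp [Groupoid.inv_eq_inv]

lemma pathClass_symm_inv {a b : X} (p : Path x a) (q : Path x b) (hend : a = b) :
    pathClass (q.trans (p.symm.cast hend.symm rfl)) =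
      (pathClass (p.trans (q.symm.cast hend rfl)))⁻¹ := by
  subst hend
  rw [cast_self_eq, cast_self_eq]
  show hq (q.trans p.symm) = Groupoid.inv (hq (p.trans q.symm))
  rw [hq_trans, hq_symm, hq_trans, hq_symm]
  simp [Groupoid.inv_eq_inv]

lemma pathClass_relTrans {a b c : X} (p : Path x a) (q : Path x b) (r : Path x c)
    (h1 : a = b) (h2 : b = c) :
    pathClass (p.trans (r.symm.cast (h1.trans h2) rfl)) =
      pathClass (q.trans (r.symm.cast h2 rfl)) * pathClass (p.trans (q.symm.cast h1 rfl)) := by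
  subst h1; subst h2
  show hq (p.trans r.symm) =
    (pathClass (p.trans q.symm) ≫ pathClass (q.trans r.symm))
  rw [pathClass_hom, pathClass_hom]
  rw [hq_trans, hq_symm, hq_trans, hq_symm, hq_trans, hq_symm]
  simp [Groupoid.inv_eq_inv]

lemma spanierRel_refl (α : RawPath X x) : SpanierRel H α α := by
  refine ⟨rfl, ?_⟩
  rw [cast_self_eq, pathClass_eq_one_of_homotopic (Path.Homotopic.refl α.path)]
  exact H.one_mem

lemma spanierRel_symm {α β : RawPath X x} (h : SpanierRel H α β) : SpanierRel H β α := by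
  obtain ⟨hend, hm⟩ := h
  exact ⟨hend.symm, by rw [pathClass_symm_inv α.path β.path hend]; exact H.inv_mem hm⟩

lemma spanierRel_trans {α β ζ : RawPath X x} (h : SpanierRel H α β) (h' : SpanierRel H β ζ) :
    SpanierRel H α ζ := by
  obtain ⟨h1, m1⟩ := h
  obtain ⟨h2, m2⟩ := h'
  exact ⟨h1.trans h2, by
    rw [pathClass_relTrans α.path β.path ζ.path h1 h2]; exact H.mul_mem m2 m1⟩

lemma mk_eq_iff {α β : RawPath X x} :
    SpanierSpace.mk H α = SpanierSpace.mk H β ↔ SpanierRel H α β := by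
  rw [show SpanierSpace.mk H α = SpanierSpace.mk H β ↔
      Quot.mk (SpanierRel H) α = Quot.mk (SpanierRel H) β from Iff.rfl, Quot.eq]
  exact Equivalence.eqvGen_iff ⟨spanierRel_refl, spanierRel_symm, spanierRel_trans⟩

lemma RawPath.extend_endpt (α : RawPath X x) {y : X} (γ : Path α.endpt y) :
    (α.extend γ).endpt = y := (α.path.trans γ).target

lemma RawPath.extend_path (α : RawPath X x) {y : X} (γ : Path α.endpt y) :
    (α.extend γ).path = (α.path.trans γ).cast rfl (α.extend_endpt γ) := rfl

lemma spanierProj_mk (α : RawPath X x) :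
    spanierProj H (SpanierSpace.mk H α) = α.endpt := rfl

lemma spanierRel_of_homotopic {α β : RawPath X x} (h : α.endpt = β.endpt)
    (hh : α.path.Homotopic (β.path.cast rfl h)) : SpanierRel H α β := by
  refine ⟨h, ?_⟩
  rw [show β.path.symm.cast h rfl = (β.path.cast rfl h).symm from
    (Path.cast_symm β.path rfl h)]
  rw [pathClass_eq_one_of_homotopic hh]
  exact H.one_mem

/- generic cast-laden homotopies -/

lemma homotopic_cancel {a y : X} (p q : Path x a) (γ : Path a y) :
    ((p.trans γ).trans ((q.trans γ).symm)).Homotopic (p.trans q.symm) := by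
  have : hq ((p.trans γ).trans ((q.trans γ).symm)) = hq (p.trans q.symm) := by
    rw [hq_trans, hq_symm, hq_trans, hq_trans, hq_trans, hq_symm]
    simp [Groupoid.inv_eq_inv]
  exact Quotient.exact this

lemma key2 {a b y w₁ w₂ : X} (p : Path x a) (q : Path x b) (hend : a = b) (γ : Path a y)
    (e1 : w₁ = y) (e2 : w₂ = y) (hE : w₁ = w₂) :
    (((p.trans γ).cast rfl e1).trans
      ((((q.trans (γ.cast hend.symm rfl)).cast rfl e2).symm).cast hE rfl)).Homotopic
      (p.trans (q.symm.cast hend rfl)) := by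
  subst hend; subst e1; subst e2
  simp only [cast_self_eq]
  exact homotopic_cancel p q γ

lemma key3 {a y z w₁ w₂ w₃ : X} (p : Path x a) (γ : Path a y) (δ : Path y z)
    (e3 : w₁ = y) (e3' : w₁ = y) (e1 : w₂ = z) (e2 : w₃ = z) (hend : w₂ = w₃) :
    ((p.trans (γ.trans δ)).cast rfl e1).Homotopic
      (((((p.trans γ).cast rfl e3).trans (δ.cast e3' rfl)).cast rfl e2).cast rfl hend) := by
  subst e3; subst e1; subst e2
  simp only [cast_self_eq]
  exact (Path.Homotopic.refl _).trans ⟨Path.Homotopy.transAssoc p γ δ⟩ |>.symm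

lemma key5 {a y w₁ w₂ : X} (p : Path x a) (γ δ : Path a y) (h : γ.Homotopic δ)
    (e1 : w₁ = y) (e2 : w₂ = y) (hE : w₁ = w₂) :
    ((p.trans γ).cast rfl e1).Homotopic (((p.trans δ).cast rfl e2).cast rfl hE) := by
  subst e1; subst e2
  simp only [cast_self_eq]
  exact Path.Homotopic.hcomp (Path.Homotopic.refl p) h

lemma key6 {a y w : X} (p : Path x a) (γ : Path a y) (e1 : w = a) (hE : a = w) :
    p.Homotopic (((p.trans (γ.trans γ.symm)).cast rfl e1).cast rfl hE) := by
  subst e1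
  simp only [cast_self_eq]
  exact ((Path.Homotopic.hcomp (Path.Homotopic.refl p)
    ⟨(Path.Homotopy.reflTransSymm γ).symm⟩).trans ⟨Path.Homotopy.transRefl p⟩).symm

/- SpanierSpace-level lemmas -/

lemma mk_extend_trans (α : RawPath X x) {y z : X} (γ : Path α.endpt y) (δ : Path y z) :
    SpanierSpace.mk H (α.extend (γ.trans δ)) =
      SpanierSpace.mk H ((α.extend γ).extend (δ.cast (α.extend_endpt γ) rfl)) := by
  apply Quot.sound
  refine spanierRel_of_homotopic
    ((α.extend_endpt _).trans ((α.extend γ).extend_endpt _).symm) ?_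
  rw [RawPath.extend_path, RawPath.extend_path, RawPath.extend_path]
  exact key3 α.path γ δ _ _ _ _ _

lemma extend_congr {α β : RawPath X x} (hend : α.endpt = β.endpt)
    (h : SpanierSpace.mk H α = SpanierSpace.mk H β) {y : X} (γ : Path α.endpt y) :
    SpanierSpace.mk H (α.extend γ) =
      SpanierSpace.mk H (β.extend (γ.cast hend.symm rfl)) := by
  obtain ⟨hend', hm⟩ := mk_eq_iff.mp h
  apply Quot.sound
  refine ⟨(α.extend_endpt _).trans (β.extend_endpt _).symm, ?_⟩
  have hc : pathClass ((α.extend γ).path.trans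
      (((β.extend (γ.cast hend.symm rfl)).path).symm.cast
        ((α.extend_endpt _).trans (β.extend_endpt _).symm) rfl)) =
      pathClass (α.path.trans (β.path.symm.cast hend rfl)) := by
    apply pathClass_congr
    rw [RawPath.extend_path, RawPath.extend_path]
    exact key2 α.path β.path hend γ _ _ _
  rw [hc]
  have hpe : pathClass (α.path.trans (β.path.symm.cast hend rfl)) =
      pathClass (α.path.trans (β.path.symm.cast hend' rfl)) := rfl
  rw [hpe]
  exact hm

lemma extend_homotopic (α : RawPath X x) {y : X} {γ δ : Path α.endpt y}
    (h : γ.Homotopic δ) :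
    SpanierSpace.mk H (α.extend γ) = SpanierSpace.mk H (α.extend δ) := by
  apply Quot.sound
  refine spanierRel_of_homotopic ((α.extend_endpt _).trans (α.extend_endpt _).symm) ?_
  rw [RawPath.extend_path, RawPath.extend_path]
  exact key5 α.path γ δ h _ _ _

lemma basicSet_subset {α β : RawPath X x} {U : Set X} {y₁ y₂ : X}
    {γ : Path α.endpt y₁} {δ : Path β.endpt y₂}
    (hγ : Set.range γ ⊆ U) (hδ : Set.range δ ⊆ U)
    (h : SpanierSpace.mk H (α.extend γ) = SpanierSpace.mk H (β.extend δ)) :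
    basicSet H α U ⊆ basicSet H β U := by
  have hend : (α.extend γ).endpt = (β.extend δ).endpt := (mk_eq_iff.mp h).1
  have hy : y₁ = y₂ := (α.extend_endpt γ).symm.trans (hend.trans (β.extend_endpt δ))
  subst hy
  rintro _ ⟨y₃, ε, hε, rfl⟩
  refine ⟨y₃, δ.trans (γ.symm.trans ε), ?_, ?_⟩
  · rw [Path.trans_range, Path.trans_range, Path.symm_range]
    exact Set.union_subset hδ (Set.union_subset hγ hε)
  · have hom1 : ε.Homotopic (γ.trans (γ.symm.trans ε)) := by
      have h1 : (γ.trans (γ.symm.trans ε)).Homotopic ((γ.trans γ.symm).trans ε) :=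
        Path.Homotopic.symm ⟨Path.Homotopy.transAssoc γ γ.symm ε⟩
      have h2 : ((γ.trans γ.symm).trans ε).Homotopic ((Path.refl α.endpt).trans ε) :=
        Path.Homotopic.hcomp ⟨(Path.Homotopy.reflTransSymm γ).symm⟩ (Path.Homotopic.refl ε)
      have h3 : ((Path.refl α.endpt).trans ε).Homotopic ε := ⟨Path.Homotopy.reflTrans ε⟩
      exact (h1.trans (h2.trans h3)).symm
    calc SpanierSpace.mk H (α.extend ε)
        = SpanierSpace.mk H (α.extend (γ.trans (γ.symm.trans ε))) := extend_homotopic α hom1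
      _ = SpanierSpace.mk H ((α.extend γ).extend
            ((γ.symm.trans ε).cast (α.extend_endpt γ) rfl)) := mk_extend_trans α γ _
      _ = SpanierSpace.mk H ((β.extend δ).extend
            ((((γ.symm.trans ε).cast (α.extend_endpt γ) rfl)).cast hend.symm rfl)) :=
          extend_congr hend h _
      _ = SpanierSpace.mk H ((β.extend δ).extend
            ((γ.symm.trans ε).cast (β.extend_endpt δ) rfl)) := rfl
      _ = SpanierSpace.mk H (β.extend (δ.trans (γ.symm.trans ε))) :=
          (mk_extend_trans β δ _).symm

end Helpers

/-- Two basic sets `⟨α,U⟩`, `⟨β,U⟩` with the same open `U` are disjoint or identical;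
moreover, if `U` is a path-connected open neighborhood of `u`, then `p⁻¹(U)` is the
union of the sets `⟨α,U⟩` over all `⟨α⟩ ∈ p⁻¹(u)`. -/
theorem basicSet_eq_or_disjoint_and_preimage_eq_iUnion
    {X : Type*} [TopologicalSpace X] {x : X} (H : Subgroup (FundamentalGroup X x))
    {U : Set X} (hUopen : IsOpen U) :
    (∀ α β : RawPath X x, α.endpt ∈ U → β.endpt ∈ U →
      basicSet H α U = basicSet H β U ∨ Disjoint (basicSet H α U) (basicSet H β U)) ∧
    (∀ u ∈ U, IsPathConnected U →
      spanierProj H ⁻¹' U = ⋃ (α : RawPath X x) (_ : α.endpt = u), basicSet H α U) := by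
  constructor
  · intro α β hα hβ
    refine or_iff_not_imp_right.mpr fun hnd => ?_
    obtain ⟨z, hz1, hz2⟩ := Set.not_disjoint_iff.mp hnd
    obtain ⟨y₁, γ, hγ, rfl⟩ := hz1
    obtain ⟨y₂, δ, hδ, heq⟩ := hz2
    exact Set.Subset.antisymm (basicSet_subset hγ hδ heq) (basicSet_subset hδ hγ heq.symm)
  · intro u hu hU
    ext z
    simp only [Set.mem_preimage, Set.mem_iUnion]
    constructor
    · intro hz
      induction z using Quot.ind with
      | _ α' =>
      have hz' : α'.endpt ∈ U := hz
      obtain ⟨γ, hγmem⟩ := hU.joinedIn α'.endpt hz' u hu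
      refine ⟨α'.extend γ, α'.extend_endpt γ, α'.endpt,
        γ.symm.cast (α'.extend_endpt γ) rfl, ?_, ?_⟩
      · rw [show ⇑(γ.symm.cast (α'.extend_endpt γ) rfl) = ⇑γ.symm from
          Path.cast_coe _ _ _, Path.symm_range]
        rintro _ ⟨t, rfl⟩
        exact hγmem t
      · calc SpanierSpace.mk H α'
            = SpanierSpace.mk H (α'.extend (γ.trans γ.symm)) := by
              apply Quot.sound
              refine spanierRel_of_homotopic (α'.extend_endpt _).symm ?_
              rw [RawPath.extend_path]
              exact key6 α'.path γ _ _
          _ = SpanierSpace.mk H ((α'.extend γ).extend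
                (γ.symm.cast (α'.extend_endpt γ) rfl)) := mk_extend_trans α' γ γ.symm
    · rintro ⟨α', hα'u, y, γ, hγ, rfl⟩
      show (α'.extend γ).endpt ∈ U
      rw [α'.extend_endpt γ]
      exact hγ ⟨1, γ.target⟩
end

section
/- If H is open in π₁(X,x) (i.e., h⁻¹(H) is open in Ω(X,x)), then for every u ∈ X the fiber p⁻¹(u) is a discrete subspace of X̃. -/
open unitInterval

section AuxLemmas

variable {X : Type*} [TopologicalSpace X] {x : X}

lemma pathClass_homotopic {γ₁ γ₂ : Path x x} (h : γ₁.Homotopic γ₂) :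
    pathClass γ₁ = pathClass γ₂ := by
  unfold pathClass
  exact congrArg _ (Quotient.sound h)

lemma pathClass_refl : pathClass (Path.refl x) = 1 := by
  rfl

lemma compactOpen_const_basis {Y : Type*} [TopologicalSpace Y] {u : Y}
    {T : Set C(unitInterval, Y)} (hT : IsOpen T)
    (hc : ContinuousMap.const unitInterval u ∈ T) :
    ∃ U : Set Y, IsOpen U ∧ u ∈ U ∧ ∀ f : C(unitInterval, Y), Set.range f ⊆ U → f ∈ T := by
  have hT' : TopologicalSpace.GenerateOpen
      (Set.image2 (fun K U ↦ {f : C(unitInterval, Y) | Set.MapsTo f K U})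
        {K | IsCompact K} {U | IsOpen U}) T := hT
  clear hT
  induction hT' with
  | basic S hS =>
    obtain ⟨K, hK, V, hV, rfl⟩ := hS
    rcases K.eq_empty_or_nonempty with rfl | ⟨t0, ht0⟩
    · exact ⟨Set.univ, isOpen_univ, trivial, fun f _ t ht => absurd ht (Set.notMem_empty t)⟩
    · exact ⟨V, hV, hc ht0, fun f hf t _ => hf (Set.mem_range_self t)⟩
  | univ => exact ⟨Set.univ, isOpen_univ, trivial, fun _ _ => trivial⟩
  | inter S₁ S₂ h1 h2 ih1 ih2 =>
    obtain ⟨U₁, o1, m1, a1⟩ := ih1 hc.1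
    obtain ⟨U₂, o2, m2, a2⟩ := ih2 hc.2
    exact ⟨U₁ ∩ U₂, o1.inter o2, ⟨m1, m2⟩,
      fun f hf => ⟨a1 f (hf.trans Set.inter_subset_left), a2 f (hf.trans Set.inter_subset_right)⟩⟩
  | sUnion S hS ih =>
    obtain ⟨s, hs, hcs⟩ := hc
    obtain ⟨U, o, m, a⟩ := ih s hs hcs
    exact ⟨U, o, m, fun f hf => ⟨s, hs, a f hf⟩⟩

lemma extend_loop_mk_eq (H : Subgroup (FundamentalGroup X x)) (β : RawPath X x)
    (γ : Path β.endpt β.endpt)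
    (hγ : pathClass (β.path.trans (γ.trans β.path.symm)) ∈ H) :
    SpanierSpace.mk H (β.extend γ) = SpanierSpace.mk H β := by
  apply Quot.sound
  have hend : (β.extend γ).endpt = β.endpt := (β.path.trans γ).target'
  refine ⟨hend, ?_⟩
  have heq : (β.extend γ).path.trans (β.path.symm.cast hend rfl)
      = (β.path.trans γ).trans β.path.symm := rfl
  rw [heq, pathClass_homotopic ⟨Path.Homotopy.transAssoc β.path γ β.path.symm⟩]
  exact hγ

lemma refl_loop_mem (H : Subgroup (FundamentalGroup X x)) (β : RawPath X x) :
    pathClass (β.path.trans ((Path.refl β.endpt).trans β.path.symm)) ∈ H := by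
  have h1 : (β.path.trans ((Path.refl β.endpt).trans β.path.symm)).Homotopic
      (β.path.trans β.path.symm) :=
    ⟨(Path.Homotopy.refl β.path).hcomp (Path.Homotopy.reflTrans β.path.symm)⟩
  have h2 : (β.path.trans β.path.symm).Homotopic (Path.refl x) :=
    ⟨(Path.Homotopy.reflTransSymm β.path).symm⟩
  rw [pathClass_homotopic (h1.trans h2), pathClass_refl]
  exact one_mem H

end AuxLemmas


/-- If `H` is an open subgroup of `π₁(X,x)` (i.e. the preimage of `H` under the map
`h : Ω(X,x) → π₁(X,x)` is open in the compact-open topology on loops at `x`), then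
every fiber `p⁻¹(u)` of `p : X̃ → X` is a discrete subspace of `X̃`. -/
theorem spanier_fiber_discrete_of_open
    {X : Type*} [TopologicalSpace X] {x : X} (H : Subgroup (FundamentalGroup X x))
    (hH : IsOpen {γ : Path x x | pathClass γ ∈ H}) (u : X) :
    DiscreteTopology (spanierProj H ⁻¹' {u} : Set (SpanierSpace H)) := by
  rw [discreteTopology_iff_isOpen_singleton]
  rintro ⟨z, hz⟩
  obtain ⟨β, rfl⟩ := Quot.exists_rep z
  have hu : β.endpt = u := hz
  subst hu
  have hk : Continuous fun γ : Path β.endpt β.endpt => β.path.trans (γ.trans β.path.symm) :=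
    Continuous.path_trans continuous_const (Continuous.path_trans continuous_id continuous_const)
  have hS : IsOpen {γ : Path β.endpt β.endpt |
      pathClass (β.path.trans (γ.trans β.path.symm)) ∈ H} := hH.preimage hk
  obtain ⟨T, hT, hTS⟩ := isOpen_induced_iff.mp hS
  have hcT : ((Path.refl β.endpt : Path β.endpt β.endpt) : C(unitInterval, X)) ∈ T := by
    have hmem : Path.refl β.endpt ∈ {γ : Path β.endpt β.endpt |
        pathClass (β.path.trans (γ.trans β.path.symm)) ∈ H} := refl_loop_mem H β
    rw [← hTS] at hmem
    exact hmem
  have hconst : ((Path.refl β.endpt : Path β.endpt β.endpt) : C(unitInterval, X))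
      = ContinuousMap.const unitInterval β.endpt := by ext t; rfl
  rw [hconst] at hcT
  obtain ⟨U, hUopen, hUmem, hUall⟩ := compactOpen_const_basis hT hcT
  have hloop : ∀ γ : Path β.endpt β.endpt, Set.range γ ⊆ U →
      pathClass (β.path.trans (γ.trans β.path.symm)) ∈ H := by
    intro γ hγ
    have hmem : γ ∈ ((↑) : Path β.endpt β.endpt → C(unitInterval, X)) ⁻¹' T :=
      hUall (γ : C(unitInterval, X)) hγ
    rw [hTS] at hmem
    exact hmem
  rw [isOpen_induced_iff]
  refine ⟨basicSet H β U,
    TopologicalSpace.isOpen_generateFrom_of_mem ⟨β, U, hUopen, hUmem, rfl⟩, ?_⟩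
  ext ⟨w, hw⟩
  simp only [Set.mem_preimage, Set.mem_singleton_iff]
  constructor
  · rintro ⟨y, γ, hγU, rfl⟩
    have hy : y = β.endpt := by
      have h1 : (β.extend γ).endpt = y := (β.path.trans γ).target'
      rw [← h1]
      exact hw
    subst hy
    exact Subtype.ext (extend_loop_mk_eq H β γ (hloop γ hγU))
  · intro hwe
    have hww : w = SpanierSpace.mk H β := congrArg Subtype.val hwe
    refine ⟨β.endpt, Path.refl β.endpt, ?_, ?_⟩
    · rintro a ⟨t, rfl⟩
      simpa using hUmem
    · rw [hww]
      exact (extend_loop_mk_eq H β (Path.refl β.endpt) (refl_loop_mem H β)).symm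
end

section
/- Suppose X is connected and locally path-connected and H is a normal subgroup of π₁(X,x) which is open (h⁻¹(H) is open in Ω(X,x)). Then p : X̃ → X is a covering map, i.e., every point of X has an open neighborhood evenly covered by p. -/
open unitInterval

/-- `IsCoveringMap` with its meaning in the older Mathlib: every fiber is discrete and every
point lies in the base set of a trivialization with that fiber. -/
def OldIsCoveringMap {E Y : Type*} [TopologicalSpace E] [TopologicalSpace Y] (f : E → Y) :
    Prop :=
  ∀ y : Y, DiscreteTopology (f ⁻¹' {y}) ∧
    ∃ t : Bundle.Trivialization (f ⁻¹' {y}) f, y ∈ t.baseSet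

section SpanierProof

open unitInterval CategoryTheory Topology

noncomputable section

variable {X : Type*} [TopologicalSpace X] {x : X}

namespace Sp

attribute [local instance] Path.Homotopic.setoid

def mor {u v : X} (p : Path u v) :
    (FundamentalGroupoid.mk u ⟶ FundamentalGroupoid.mk v) := ⟦p⟧

def eqh {u v : X} (h : u = v) :
    (FundamentalGroupoid.mk u ⟶ FundamentalGroupoid.mk v) :=
  eqToHom (congrArg FundamentalGroupoid.mk h)

lemma mor_trans {u v w : X} (p : Path u v) (q : Path v w) :
    mor (p.trans q) = mor p ≫ mor q :=
  rfl

lemma mor_symm {u v : X} (p : Path u v) : mor p.symm = inv (mor p) := by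
  rw [← Groupoid.inv_eq_inv]; rfl

lemma mor_refl (u : X) : mor (Path.refl u) = 𝟙 (FundamentalGroupoid.mk u) := rfl

lemma mor_cast {u v u' v' : X} (p : Path u v) (h1 : u' = u) (h2 : v' = v) :
    mor (p.cast h1 h2) = eqh h1 ≫ mor p ≫ eqh h2.symm := by
  subst h1; subst h2
  simp only [eqh, eqToHom_refl, Category.comp_id, Category.id_comp]
  congr 1

@[simp] lemma eqh_refl (u : X) : eqh (rfl : u = u) = 𝟙 _ := rfl

@[simp] lemma eqh_trans {u v w : X} (h1 : u = v) (h2 : v = w) :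
    eqh h1 ≫ eqh h2 = eqh (h1.trans h2) := by
  simp [eqh]

@[simp] lemma eqh_trans_assoc {u v w : X} {Z : FundamentalGroupoid X} (h1 : u = v) (h2 : v = w)
    (f : FundamentalGroupoid.mk w ⟶ Z) :
    eqh h1 ≫ eqh h2 ≫ f = eqh (h1.trans h2) ≫ f := by
  rw [← Category.assoc, eqh_trans]

@[simp] lemma inv_eqh {u v : X} (h : u = v) : inv (eqh h) = eqh h.symm := by
  simp [eqh]

lemma pathClass_eq (γ : Path x x) :
    pathClass γ = FundamentalGroup.fromArrow (X := TopCat.of X) (mor γ) := rfl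

def inH (H : Subgroup (FundamentalGroup X x))
    (f : FundamentalGroupoid.mk x ⟶ FundamentalGroupoid.mk x) : Prop :=
  FundamentalGroup.fromArrow (X := TopCat.of X) f ∈ H

variable (H : Subgroup (FundamentalGroup X x))

lemma pathClass_mem_iff (γ : Path x x) : pathClass γ ∈ H ↔ inH H (mor γ) := Iff.rfl

lemma fromArrow_comp (f g : FundamentalGroupoid.mk x ⟶ FundamentalGroupoid.mk x) :
    FundamentalGroup.fromArrow (X := TopCat.of X) (f ≫ g) =
      FundamentalGroup.fromArrow (X := TopCat.of X) g *
        FundamentalGroup.fromArrow (X := TopCat.of X) f :=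
  rfl

lemma fromArrow_inv (f : FundamentalGroupoid.mk x ⟶ FundamentalGroupoid.mk x) :
    FundamentalGroup.fromArrow (X := TopCat.of X) (inv f) =
      (FundamentalGroup.fromArrow (X := TopCat.of X) f)⁻¹ :=
  by rw [← Groupoid.inv_eq_inv]; rfl

lemma fromArrow_id :
    FundamentalGroup.fromArrow (X := TopCat.of X)
      (𝟙 (FundamentalGroupoid.mk x)) = 1 :=
  rfl

lemma inH_one : inH H (𝟙 _) := by
  rw [inH, fromArrow_id]; exact one_mem H

lemma inH_mul {f g : FundamentalGroupoid.mk x ⟶ FundamentalGroupoid.mk x}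
    (hf : inH H f) (hg : inH H g) : inH H (f ≫ g) := by
  rw [inH, fromArrow_comp]; exact mul_mem hg hf

lemma inH_inv {f : FundamentalGroupoid.mk x ⟶ FundamentalGroupoid.mk x}
    (hf : inH H f) : inH H (inv f) := by
  rw [inH, fromArrow_inv]; exact inv_mem hf

lemma inH_conj (hn : H.Normal) {f : FundamentalGroupoid.mk x ⟶ FundamentalGroupoid.mk x}
    (hf : inH H f) (c : FundamentalGroupoid.mk x ⟶ FundamentalGroupoid.mk x) :
    inH H (c ≫ f ≫ inv c) := by
  rw [inH, fromArrow_comp, fromArrow_comp, fromArrow_inv]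
  simpa [mul_assoc] using hn.conj_mem _ hf (FundamentalGroup.fromArrow (X := TopCat.of X) c)⁻¹

lemma inH_congr {f g : FundamentalGroupoid.mk x ⟶ FundamentalGroupoid.mk x}
    (h : f = g) (hf : inH H f) : inH H g := h ▸ hf

/-! ### quotient layer -/

lemma extend_endpt (α : RawPath X x) {w : X} (γ : Path α.endpt w) :
    (α.extend γ).endpt = w :=
  (α.path.trans γ).target

lemma extend_path_eq (α : RawPath X x) {w : X} (γ : Path α.endpt w) :
    (α.extend γ).path = (α.path.trans γ).cast rfl (extend_endpt α γ) :=
  Path.ext rfl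

lemma mor_extend (α : RawPath X x) {w : X} (γ : Path α.endpt w) :
    mor (α.extend γ).path = (mor α.path ≫ mor γ) ≫ eqh (extend_endpt α γ).symm := by
  rw [extend_path_eq, mor_cast, mor_trans]
  simp

lemma spanierRel_iff (α β : RawPath X x) :
    SpanierRel H α β ↔ ∃ hend : α.endpt = β.endpt,
      inH H (mor α.path ≫ eqh hend ≫ inv (mor β.path)) := by
  refine exists_congr fun hend => ?_
  rw [pathClass_mem_iff, mor_trans, mor_cast, mor_symm]
  simp

lemma rel_refl (α : RawPath X x) : SpanierRel H α α := by
  refine (spanierRel_iff H α α).mpr ⟨rfl, inH_congr H (g := _) ?_ (inH_one H)⟩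
  simp

lemma rel_symm {α β : RawPath X x} (h : SpanierRel H α β) : SpanierRel H β α := by
  obtain ⟨hend, hm⟩ := (spanierRel_iff H α β).mp h
  refine (spanierRel_iff H β α).mpr ⟨hend.symm, inH_congr H (g := _) ?_ (inH_inv H hm)⟩
  simp

lemma rel_trans {α β γ : RawPath X x} (h1 : SpanierRel H α β) (h2 : SpanierRel H β γ) :
    SpanierRel H α γ := by
  obtain ⟨he1, hm1⟩ := (spanierRel_iff H α β).mp h1
  obtain ⟨he2, hm2⟩ := (spanierRel_iff H β γ).mp h2
  refine (spanierRel_iff H α γ).mpr ⟨he1.trans he2, inH_congr H (g := _) ?_ (inH_mul H hm1 hm2)⟩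
  simp

lemma rel_equivalence : Equivalence (SpanierRel H) :=
  ⟨rel_refl H, rel_symm H, rel_trans H⟩

lemma mk_eq_iff {α β : RawPath X x} :
    SpanierSpace.mk H α = SpanierSpace.mk H β ↔ SpanierRel H α β := by
  refine Quot.eq.trans ?_
  exact (rel_equivalence H).eqvGen_iff

@[simp] lemma spanierProj_mk (α : RawPath X x) :
    spanierProj H (SpanierSpace.mk H α) = α.endpt := rfl


section Basis
variable {H}

@[simp] lemma eqh_self {u : X} (h : u = u) : eqh h = 𝟙 _ := rfl

lemma cast_range {u v u' v' : X} (γ : Path u v) (h1 : u' = u) (h2 : v' = v) :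
    Set.range (γ.cast h1 h2) = Set.range γ := rfl

lemma target_mem_range {u v : X} (γ : Path u v) : v ∈ Set.range γ := ⟨1, γ.target⟩

variable (H)

lemma mem_basicSet_self {α : RawPath X x} {U : Set X} (h : α.endpt ∈ U) :
    SpanierSpace.mk H α ∈ basicSet H α U := by
  refine ⟨α.endpt, Path.refl α.endpt, ?_, ?_⟩
  · rw [Path.refl_range]; exact Set.singleton_subset_iff.mpr h
  · rw [mk_eq_iff]
    refine (spanierRel_iff ..).mpr ⟨(extend_endpt α _).symm, ?_⟩
    refine inH_congr H (g := _) ?_ (inH_one H)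
    rw [mor_extend, mor_refl]
    simp

lemma mk_extend_congr {α β : RawPath X x} (h : SpanierRel H α β)
    (hend : β.endpt = α.endpt) {w : X} (γ : Path α.endpt w) :
    SpanierSpace.mk H (α.extend γ) = SpanierSpace.mk H (β.extend (γ.cast hend rfl)) := by
  obtain ⟨he, hm⟩ := (spanierRel_iff H α β).mp h
  rw [mk_eq_iff]
  refine (spanierRel_iff ..).mpr ⟨(extend_endpt ..).trans (extend_endpt ..).symm, ?_⟩
  refine inH_congr H (g := _) ?_ hm
  rw [mor_extend, mor_extend, mor_cast]
  simp

lemma mk_extend_extend (α : RawPath X x) {w w' : X} (γ : Path α.endpt w)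
    (γ' : Path (α.extend γ).endpt w') :
    SpanierSpace.mk H ((α.extend γ).extend γ') =
      SpanierSpace.mk H (α.extend (γ.trans (γ'.cast (extend_endpt α γ).symm rfl))) := by
  rw [mk_eq_iff]
  refine (spanierRel_iff ..).mpr ⟨(extend_endpt ..).trans (extend_endpt ..).symm, ?_⟩
  refine inH_congr H (g := _) ?_ (inH_one H)
  rw [mor_extend, mor_extend, mor_extend, mor_trans, mor_cast]
  simp

lemma basicSet_subset {α δ : RawPath X x} {W W' : Set X} (hWW : W' ⊆ W)
    (hδ : SpanierSpace.mk H δ ∈ basicSet H α W) :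
    basicSet H δ W' ⊆ basicSet H α W := by
  obtain ⟨w, γ, hγ, heq⟩ := hδ
  obtain ⟨he, hm⟩ := (spanierRel_iff ..).mp ((mk_eq_iff H).mp heq)
  rintro z ⟨w', γ', hγ', rfl⟩
  have hwδ : (α.extend γ).endpt = δ.endpt := he.symm
  refine ⟨w', γ.trans ((γ'.cast hwδ rfl).cast (extend_endpt α γ).symm rfl), ?_, ?_⟩
  · rw [Path.trans_range, cast_range, cast_range]
    exact Set.union_subset hγ (hγ'.trans hWW)
  · rw [mk_extend_congr H ((mk_eq_iff H).mp heq) hwδ γ', mk_extend_extend]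

lemma isBasis : TopologicalSpace.IsTopologicalBasis
    {S : Set (SpanierSpace H) | ∃ (α : RawPath X x) (U : Set X),
      IsOpen U ∧ α.endpt ∈ U ∧ S = basicSet H α U} := by
  refine ⟨?_, ?_, rfl⟩
  · rintro t1 ⟨α, W1, hW1, hα1, rfl⟩ t2 ⟨β, W2, hW2, hβ2, rfl⟩ z ⟨hz1, hz2⟩
    obtain ⟨w1, γ1, hγ1, rfl⟩ := hz1
    obtain ⟨w2, γ2, hγ2, heq2⟩ := hz2
    set δ := α.extend γ1 with hδ
    have hδ1 : δ.endpt ∈ W1 := by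
      rw [extend_endpt]; exact hγ1 (target_mem_range γ1)
    have hδ2 : δ.endpt ∈ W2 := by
      obtain ⟨he, -⟩ := (spanierRel_iff ..).mp ((mk_eq_iff H).mp heq2)
      rw [he, extend_endpt]; exact hγ2 (target_mem_range γ2)
    refine ⟨basicSet H δ (W1 ∩ W2), ⟨δ, W1 ∩ W2, hW1.inter hW2, ⟨hδ1, hδ2⟩, rfl⟩,
      mem_basicSet_self H ⟨hδ1, hδ2⟩, Set.subset_inter ?_ ?_⟩
    · exact basicSet_subset H Set.inter_subset_left ⟨w1, γ1, hγ1, rfl⟩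
    · exact basicSet_subset H Set.inter_subset_right ⟨w2, γ2, hγ2, heq2⟩
  · rw [Set.sUnion_eq_univ_iff]
    intro z
    induction z using Quot.inductionOn with
    | h δ => exact ⟨basicSet H δ Set.univ, ⟨δ, Set.univ, isOpen_univ, trivial, rfl⟩,
        mem_basicSet_self H trivial⟩

lemma isOpen_basicSet {α : RawPath X x} {U : Set X} (hU : IsOpen U) (hα : α.endpt ∈ U) :
    IsOpen (basicSet H α U) :=
  (isBasis H).isOpen ⟨α, U, hU, hα, rfl⟩

lemma mem_of_mem_basicSet {α : RawPath X x} {U : Set X} {z : SpanierSpace H}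
    (hz : z ∈ basicSet H α U) : spanierProj H z ∈ U := by
  obtain ⟨w, γ, hγ, rfl⟩ := hz
  rw [spanierProj_mk, extend_endpt]
  exact hγ (target_mem_range γ)

lemma continuous_spanierProj : Continuous (spanierProj H) := by
  rw [continuous_def]
  intro V hV
  rw [(isBasis H).isOpen_iff]
  intro z hz
  induction z using Quot.inductionOn with
  | h δ =>
    refine ⟨basicSet H δ V, ⟨δ, V, hV, hz, rfl⟩, mem_basicSet_self H hz, ?_⟩
    intro z' hz'
    exact mem_of_mem_basicSet H hz'

end Basis


section Nbhd

open Set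

lemma exists_open_of_const_mem {y : X} {T : Set C(I, X)} (hT : IsOpen T)
    (f0 : C(I, X)) (hf0 : ∀ t, f0 t = y) (hf0T : f0 ∈ T) :
    ∃ U : Set X, IsOpen U ∧ y ∈ U ∧ ∀ f : C(I, X), Set.range f ⊆ U → f ∈ T := by
  classical
  have hbasis := TopologicalSpace.isTopologicalBasis_of_subbasis
    (ContinuousMap.compactOpen_eq (X := I) (Y := X))
  obtain ⟨v, hvB, hf0v, hvT⟩ := hbasis.exists_subset_of_mem_open hf0T hT
  obtain ⟨Fam, ⟨hFin, hsub⟩, rfl⟩ := hvB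
  have hKV : ∀ m : Set C(I, X), ∃ K V, IsCompact K ∧ IsOpen V ∧
      (m ∈ Fam → m = {f : C(I, X) | Set.MapsTo f K V}) := by
    intro m
    by_cases hm : m ∈ Fam
    · obtain ⟨K, hK, V, hV, rfl⟩ := hsub hm
      exact ⟨K, V, hK, hV, fun _ => rfl⟩
    · exact ⟨∅, Set.univ, isCompact_empty, isOpen_univ, fun h => absurd h hm⟩
  choose K V hK hV hmeq using hKV
  refine ⟨⋂ m ∈ Fam, (if (K m).Nonempty then V m else Set.univ), ?_, ?_, ?_⟩
  · exact hFin.isOpen_biInter fun m _ => by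
      split <;> [exact hV m; exact isOpen_univ]
  · refine Set.mem_iInter₂.mpr fun m hm => ?_
    split
    · next hne =>
      obtain ⟨t, ht⟩ := hne
      have : f0 ∈ m := Set.mem_sInter.mp hf0v m hm
      rw [hmeq m hm] at this
      simpa [hf0 t] using this ht
    · exact Set.mem_univ _
  · intro f hf
    refine hvT fun m hm => ?_
    rw [hmeq m hm]
    intro t ht
    have hU : f t ∈ ⋂ m ∈ Fam, (if (K m).Nonempty then V m else Set.univ) :=
      hf (Set.mem_range_self t)
    have := Set.mem_iInter₂.mp hU m hm
    rwa [if_pos ⟨t, ht⟩] at this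

lemma exists_conj_nbhd (hopen : IsOpen {γ : Path x x | pathClass γ ∈ H})
    (α : RawPath X x) :
    ∃ U : Set X, IsOpen U ∧ α.endpt ∈ U ∧
      ∀ ℓ : Path α.endpt α.endpt, Set.range ℓ ⊆ U →
        inH H (mor α.path ≫ mor ℓ ≫ inv (mor α.path)) := by
  have hΨ : Continuous (fun γ : Path α.endpt α.endpt =>
      α.path.trans (γ.trans α.path.symm)) :=
    continuous_const.path_trans (continuous_id.path_trans continuous_const)
  have hS' : IsOpen ((fun γ : Path α.endpt α.endpt =>
      α.path.trans (γ.trans α.path.symm)) ⁻¹' {γ : Path x x | pathClass γ ∈ H}) :=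
    hopen.preimage hΨ
  obtain ⟨T, hT, hTeq⟩ := isOpen_induced_iff.mp hS'
  have hrefl : (Path.refl α.endpt : C(I, X)) ∈ T := by
    have : Path.refl α.endpt ∈ ((↑) : Path α.endpt α.endpt → C(I, X)) ⁻¹' T := by
      rw [hTeq]
      show pathClass _ ∈ H
      rw [pathClass_mem_iff, mor_trans, mor_trans, mor_refl, mor_symm]
      refine inH_congr H (g := _) ?_ (inH_one H)
      simp
    exact this
  obtain ⟨U, hUo, hyU, hU⟩ := exists_open_of_const_mem hT
    (Path.refl α.endpt : C(I, X)) (fun t => rfl) hrefl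
  refine ⟨U, hUo, hyU, fun ℓ hℓ => ?_⟩
  have hmem : ℓ ∈ ((↑) : Path α.endpt α.endpt → C(I, X)) ⁻¹' T :=
    hU (ℓ : C(I, X)) hℓ
  rw [hTeq] at hmem
  have : pathClass (α.path.trans (ℓ.trans α.path.symm)) ∈ H := hmem
  rw [pathClass_mem_iff, mor_trans, mor_trans, mor_symm] at this
  exact this

end Nbhd

section Main
open scoped Classical
variable [LocallyPathConnectedSpace X]

/-- A good neighborhood for the Spanier construction. -/
structure GoodNbhd (H : Subgroup (FundamentalGroup X x)) (A : RawPath X x) (U : Set X) :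
    Prop where
  isOpen : IsOpen U
  mem : A.endpt ∈ U
  conn : IsPathConnected U
  conj : ∀ ℓ : Path A.endpt A.endpt, Set.range ℓ ⊆ U →
    inH H (mor A.path ≫ mor ℓ ≫ inv (mor A.path))

variable {H} {A : RawPath X x} {U : Set X}

/-- A chosen path in `U` from `u` to the basepoint of the good neighborhood. -/
noncomputable def GoodNbhd.rho (hG : GoodNbhd H A U) (u : X) (hu : u ∈ U) :
    Path u A.endpt :=
  (hG.conn.joinedIn u hu A.endpt hG.mem).somePath

lemma GoodNbhd.rho_range (hG : GoodNbhd H A U) (u : X) (hu : u ∈ U) :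
    Set.range (hG.rho u hu) ⊆ U := by
  rw [Set.range_subset_iff]
  exact (hG.conn.joinedIn u hu A.endpt hG.mem).somePath_mem

lemma conjU (hn : H.Normal) (hG : GoodNbhd H A U) {w : X} (hw : w ∈ U)
    (m : FundamentalGroupoid.mk x ⟶ FundamentalGroupoid.mk w)
    (ℓ : Path w w) (hℓ : Set.range ℓ ⊆ U) : inH H (m ≫ mor ℓ ≫ inv m) := by
  set ρ := hG.rho w hw with hρdef
  have hρ : Set.range ρ ⊆ U := hG.rho_range w hw
  have h2 := hG.conj (ρ.symm.trans (ℓ.trans ρ)) (by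
    rw [Path.trans_range, Path.trans_range, Path.symm_range]
    exact Set.union_subset hρ (Set.union_subset hℓ hρ))
  rw [mor_trans, mor_trans, mor_symm] at h2
  have h3 := inH_conj H hn h2 (m ≫ mor ρ ≫ inv (mor A.path))
  refine inH_congr H (g := _) ?_ h3
  simp

lemma mk_extend_eq (hn : H.Normal) (hG : GoodNbhd H A U) {β β' : RawPath X x}
    (h : SpanierRel H β β') {w : X} (γ : Path β.endpt w) (γ' : Path β'.endpt w)
    (hγ : Set.range γ ⊆ U) (hγ' : Set.range γ' ⊆ U) :
    SpanierSpace.mk H (β.extend γ) = SpanierSpace.mk H (β'.extend γ') := by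
  obtain ⟨hend, hm⟩ := (spanierRel_iff ..).mp h
  have hw : w ∈ U := hγ (target_mem_range γ)
  have hℓ : Set.range (γ.symm.trans (γ'.cast hend rfl)) ⊆ U := by
    rw [Path.trans_range, Path.symm_range, cast_range]
    exact Set.union_subset hγ hγ'
  have h1 := conjU hn hG hw (mor β.path ≫ mor γ) (γ.symm.trans (γ'.cast hend rfl)) hℓ
  have h2 := inH_mul H (inH_inv H h1) hm
  rw [mk_eq_iff]
  refine (spanierRel_iff ..).mpr ⟨(extend_endpt ..).trans (extend_endpt ..).symm, ?_⟩
  refine inH_congr H (g := _) ?_ h2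
  rw [mor_extend, mor_extend, mor_trans, mor_symm, mor_cast]
  simp

/-- The raw "sheet index" map. -/
noncomputable def indRaw (hG : GoodNbhd H A U) : RawPath X x → SpanierSpace H := fun β =>
  if hβ : β.endpt ∈ U then SpanierSpace.mk H (β.extend (hG.rho β.endpt hβ))
  else SpanierSpace.mk H β

/-- The "sheet index" map on the Spanier space. -/
noncomputable def ind (hn : H.Normal) (hG : GoodNbhd H A U) :
    SpanierSpace H → SpanierSpace H :=
  Quot.lift (indRaw hG) (by
    intro β β' h
    obtain ⟨hend, -⟩ := id h
    unfold indRaw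
    by_cases hβ : β.endpt ∈ U
    · rw [dif_pos hβ, dif_pos (hend ▸ hβ)]
      exact mk_extend_eq hn hG h _ _ (hG.rho_range _ hβ) (hG.rho_range _ (hend ▸ hβ))
    · rw [dif_neg hβ, dif_neg (hend ▸ hβ)]
      exact Quot.sound h)

lemma ind_mk (hn : H.Normal) (hG : GoodNbhd H A U) (β : RawPath X x) :
    ind hn hG (SpanierSpace.mk H β) = indRaw hG β := rfl

lemma proj_ind (hn : H.Normal) (hG : GoodNbhd H A U) {z : SpanierSpace H}
    (hz : spanierProj H z ∈ U) : spanierProj H (ind hn hG z) = A.endpt := by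
  induction z using Quot.inductionOn with
  | h β =>
    have hβ : β.endpt ∈ U := hz
    show spanierProj H (indRaw hG β) = A.endpt
    rw [indRaw, dif_pos hβ, spanierProj_mk, extend_endpt]

/-- The raw inverse map. -/
noncomputable def downRaw (hG : GoodNbhd H A U) (u : X) (hu : u ∈ U) :
    RawPath X x → SpanierSpace H := fun β =>
  if hβ : β.endpt = A.endpt then
    SpanierSpace.mk H (β.extend (((hG.rho u hu).symm).cast hβ rfl))
  else SpanierSpace.mk H β

/-- The inverse map on the Spanier space. -/
noncomputable def down (hn : H.Normal) (hG : GoodNbhd H A U) (u : X) (hu : u ∈ U) :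
    SpanierSpace H → SpanierSpace H :=
  Quot.lift (downRaw hG u hu) (by
    intro β β' h
    obtain ⟨hend, -⟩ := id h
    unfold downRaw
    by_cases hβ : β.endpt = A.endpt
    · rw [dif_pos hβ, dif_pos (hend ▸ hβ)]
      refine mk_extend_eq hn hG h _ _ ?_ ?_ <;>
        (rw [cast_range, Path.symm_range]; exact hG.rho_range u hu)
    · rw [dif_neg hβ, dif_neg (hend ▸ hβ)]
      exact Quot.sound h)

lemma down_mk (hn : H.Normal) (hG : GoodNbhd H A U) (u : X) (hu : u ∈ U)
    (β : RawPath X x) : down hn hG u hu (SpanierSpace.mk H β) = downRaw hG u hu β := rfl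

lemma proj_down (hn : H.Normal) (hG : GoodNbhd H A U) (u : X) (hu : u ∈ U)
    {z : SpanierSpace H} (hz : spanierProj H z = A.endpt) :
    spanierProj H (down hn hG u hu z) = u := by
  induction z using Quot.inductionOn with
  | h β =>
    have hβ : β.endpt = A.endpt := hz
    show spanierProj H (downRaw hG u hu β) = u
    rw [downRaw, dif_pos hβ, spanierProj_mk, extend_endpt]

lemma mk_extend_loop (hn : H.Normal) (hG : GoodNbhd H A U) {β : RawPath X x} {w : X}
    (γ : Path β.endpt w) (hγ : Set.range γ ⊆ U) (hw : w = β.endpt) :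
    SpanierSpace.mk H (β.extend γ) = SpanierSpace.mk H β := by
  have hβU : β.endpt ∈ U := hw ▸ hγ (target_mem_range γ)
  have h1 := conjU hn hG hβU (mor β.path) (γ.cast rfl hw.symm)
    (by rw [cast_range]; exact hγ)
  rw [mk_eq_iff]
  refine (spanierRel_iff ..).mpr ⟨(extend_endpt ..).trans hw, ?_⟩
  refine inH_congr H (g := _) ?_ h1
  rw [mor_extend, mor_cast]
  simp

lemma down_ind (hn : H.Normal) (hG : GoodNbhd H A U) (u : X) (hu : u ∈ U)
    (z : SpanierSpace H) (hz : spanierProj H z = u) :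
    down hn hG u hu (ind hn hG z) = z := by
  induction z using Quot.inductionOn with
  | h β =>
    have hβu : β.endpt = u := hz
    have hβU : β.endpt ∈ U := hβu ▸ hu
    show down hn hG u hu (indRaw hG β) = SpanierSpace.mk H β
    rw [indRaw, dif_pos hβU, down_mk, downRaw, dif_pos (extend_endpt β _),
      mk_extend_extend]
    refine mk_extend_loop hn hG _ ?_ hβu.symm
    rw [Path.trans_range, cast_range, cast_range, Path.symm_range]
    exact Set.union_subset (hG.rho_range _ hβU) (hG.rho_range _ hu)

lemma ind_down (hn : H.Normal) (hG : GoodNbhd H A U) (u : X) (hu : u ∈ U)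
    (z : SpanierSpace H) (hz : spanierProj H z = A.endpt) :
    ind hn hG (down hn hG u hu z) = z := by
  induction z using Quot.inductionOn with
  | h β =>
    have hβA : β.endpt = A.endpt := hz
    show ind hn hG (downRaw hG u hu β) = SpanierSpace.mk H β
    have hcond : (β.extend (((hG.rho u hu).symm).cast hβA rfl)).endpt ∈ U := by
      rw [extend_endpt]; exact hu
    rw [downRaw, dif_pos hβA, ind_mk, indRaw, dif_pos hcond, mk_extend_extend]
    refine mk_extend_loop hn hG _ ?_ hβA.symm
    rw [Path.trans_range, cast_range, cast_range, Path.symm_range]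
    exact Set.union_subset (hG.rho_range _ hu) (hG.rho_range _ hcond)

lemma ind_const (hn : H.Normal) (hG : GoodNbhd H A U) {β : RawPath X x}
    (hβ : β.endpt ∈ U) {z : SpanierSpace H} (hz : z ∈ basicSet H β U) :
    ind hn hG z = ind hn hG (SpanierSpace.mk H β) := by
  obtain ⟨w, γ, hγ, rfl⟩ := hz
  have hw : w ∈ U := hγ (target_mem_range γ)
  have h1 : (β.extend γ).endpt ∈ U := by rw [extend_endpt]; exact hw
  show indRaw hG (β.extend γ) = indRaw hG β
  rw [indRaw, dif_pos h1, indRaw, dif_pos hβ, mk_extend_extend]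
  refine mk_extend_eq hn hG (rel_refl H β) _ _ ?_ (hG.rho_range _ hβ)
  rw [Path.trans_range, cast_range]
  exact Set.union_subset hγ (hG.rho_range _ h1)

lemma fiber_discrete (hn : H.Normal) (hG : GoodNbhd H A U) :
    DiscreteTopology ↥(spanierProj H ⁻¹' {A.endpt}) := by
  rw [discreteTopology_iff_isOpen_singleton]
  rintro ⟨z, hz⟩
  obtain ⟨β, rfl⟩ := Quot.exists_rep z
  have hβA : β.endpt = A.endpt := hz
  have hβU : β.endpt ∈ U := hβA ▸ hG.mem
  have hkey : {(⟨Quot.mk _ β, hz⟩ : ↥(spanierProj H ⁻¹' {A.endpt}))} =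
      Subtype.val ⁻¹' basicSet H β U := by
    ext ⟨z', hz'⟩
    simp only [Set.mem_singleton_iff, Set.mem_preimage, Subtype.ext_iff]
    constructor
    · rintro rfl
      exact mem_basicSet_self H hβU
    · rintro ⟨w, γ, hγ, rfl⟩
      have hwz : w = β.endpt := by
        have : spanierProj H (SpanierSpace.mk H (β.extend γ)) = A.endpt := hz'
        rw [spanierProj_mk, extend_endpt] at this
        rw [this, hβA]
      exact mk_extend_loop hn hG γ hγ hwz
  rw [hkey]
  exact (isOpen_basicSet H hG.isOpen hβU).preimage continuous_subtype_val

/-- The fiber-index component of the trivialization. -/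
noncomputable def indF (hn : H.Normal) (hG : GoodNbhd H A U) (z : SpanierSpace H) :
    ↥(spanierProj H ⁻¹' {A.endpt}) :=
  if h : spanierProj H z ∈ U then ⟨ind hn hG z, proj_ind hn hG h⟩
  else ⟨SpanierSpace.mk H A, rfl⟩

/-- The inverse of the trivialization. -/
noncomputable def trivInv (hn : H.Normal) (hG : GoodNbhd H A U) (u : X)
    (z' : ↥(spanierProj H ⁻¹' {A.endpt})) : SpanierSpace H :=
  if h : u ∈ U then down hn hG u h z'.1 else z'.1

lemma proj_trivInv (hn : H.Normal) (hG : GoodNbhd H A U) {u : X} (hu : u ∈ U)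
    (z' : ↥(spanierProj H ⁻¹' {A.endpt})) :
    spanierProj H (trivInv hn hG u z') = u := by
  rw [trivInv, dif_pos hu]
  exact proj_down hn hG u hu z'.2

/-- The local trivialization of the Spanier covering over a good neighborhood. -/
noncomputable def spTriv (hn : H.Normal) (hG : GoodNbhd H A U) :
    Bundle.Trivialization (↥(spanierProj H ⁻¹' {A.endpt})) (spanierProj H) where
  toFun z := (spanierProj H z, indF hn hG z)
  invFun p := trivInv hn hG p.1 p.2
  source := spanierProj H ⁻¹' U
  target := U ×ˢ Set.univ
  map_source' z hz := ⟨hz, Set.mem_univ _⟩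
  map_target' p hp := by
    show spanierProj H (trivInv hn hG p.1 p.2) ∈ U
    rw [proj_trivInv hn hG hp.1]
    exact hp.1
  left_inv' z hz := by
    have hz' : spanierProj H z ∈ U := hz
    show trivInv hn hG (spanierProj H z) (indF hn hG z) = z
    rw [trivInv, dif_pos hz', indF, dif_pos hz']
    exact down_ind hn hG _ hz' z rfl
  right_inv' p hp := by
    have hu : p.1 ∈ U := hp.1
    have h1 : spanierProj H (trivInv hn hG p.1 p.2) = p.1 := proj_trivInv hn hG hu p.2
    have h1U : spanierProj H (trivInv hn hG p.1 p.2) ∈ U := by rw [h1]; exact hu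
    refine Prod.ext h1 ?_
    show indF hn hG (trivInv hn hG p.1 p.2) = p.2
    rw [indF, dif_pos h1U]
    refine Subtype.ext ?_
    show ind hn hG (trivInv hn hG p.1 p.2) = p.2.1
    rw [trivInv, dif_pos hu]
    exact ind_down hn hG p.1 hu p.2.1 p.2.2
  open_source := hG.isOpen.preimage (continuous_spanierProj H)
  open_target := hG.isOpen.prod isOpen_univ
  continuousOn_toFun := by
    refine continuousOn_of_forall_continuousAt ?_
    intro z hz
    obtain ⟨β, rfl⟩ := Quot.exists_rep z
    have hβU : β.endpt ∈ U := hz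
    refine ContinuousAt.congr
      (f := fun z => (spanierProj H z, indF hn hG (SpanierSpace.mk H β))) ?_ ?_
    · exact ((continuous_spanierProj H).prodMk continuous_const).continuousAt
    · refine Filter.eventuallyEq_of_mem
        ((isOpen_basicSet H hG.isOpen hβU).mem_nhds (mem_basicSet_self H hβU)) ?_
      intro z' hz'
      have hz'U : spanierProj H z' ∈ U := mem_of_mem_basicSet H hz'
      show (spanierProj H z', indF hn hG (SpanierSpace.mk H β)) =
        (spanierProj H z', indF hn hG z')
      have hmU : spanierProj H (SpanierSpace.mk H β) ∈ U := hβU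
      have h2 : indF hn hG (SpanierSpace.mk H β) = indF hn hG z' := by
        rw [indF, dif_pos hmU, indF, dif_pos hz'U]
        exact Subtype.ext (ind_const hn hG hβU hz').symm
      rw [h2]
  continuousOn_invFun := by
    haveI := fiber_discrete hn hG
    show ContinuousOn (fun p : X × ↥(spanierProj H ⁻¹' {A.endpt}) =>
      trivInv hn hG p.1 p.2) (U ×ˢ Set.univ)
    intro p₀ hp₀
    apply ContinuousAt.continuousWithinAt
    have hu₀ : p₀.1 ∈ U := hp₀.1
    obtain ⟨u₀, z₀'⟩ := p₀
    obtain ⟨β, hβrep⟩ := Quot.exists_rep z₀'.1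
    have hβA : β.endpt = A.endpt := by
      have := z₀'.2
      rw [← hβrep] at this
      exact this
    rw [ContinuousAt, (isBasis H).nhds_hasBasis.tendsto_right_iff]
    rintro t ⟨⟨α, W, hWo, hαW, rfl⟩, hmem⟩
    have hmem' : trivInv hn hG u₀ z₀' ∈ basicSet H α W := hmem
    have hdown : trivInv hn hG u₀ z₀' =
        SpanierSpace.mk H (β.extend (((hG.rho u₀ hu₀).symm).cast hβA rfl)) := by
      rw [trivInv, dif_pos (show u₀ ∈ U from hu₀), ← hβrep]
      show downRaw hG u₀ hu₀ β = _
      rw [downRaw, dif_pos hβA]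
    rw [hdown] at hmem'
    set σ₀ : Path β.endpt u₀ := ((hG.rho u₀ hu₀).symm).cast hβA rfl with hσ₀
    set δ : RawPath X x := β.extend σ₀ with hδ
    have hδu : δ.endpt = u₀ := extend_endpt β σ₀
    have hδW : δ.endpt ∈ W := by
      have := mem_of_mem_basicSet H hmem'
      rwa [spanierProj_mk] at this
    have hδU : δ.endpt ∈ U := by rw [hδu]; exact hu₀
    have hVo : IsOpen (pathComponentIn (W ∩ U) δ.endpt) :=
      (hWo.inter hG.isOpen).pathComponentIn _
    have hδV : δ.endpt ∈ pathComponentIn (W ∩ U) δ.endpt :=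
      mem_pathComponentIn_self ⟨hδW, hδU⟩
    have hu₀V : u₀ ∈ pathComponentIn (W ∩ U) δ.endpt := Set.mem_of_eq_of_mem hδu.symm hδV
    have hN : (pathComponentIn (W ∩ U) δ.endpt) ×ˢ ({z₀'} : Set _) ∈ 𝓝 (u₀, z₀') :=
      prod_mem_nhds (hVo.mem_nhds hu₀V) ((isOpen_discrete _).mem_nhds rfl)
    filter_upwards [hN] with p hp
    obtain ⟨hp1, hp2⟩ := hp
    have hp2' : p.2 = z₀' := hp2
    have hγjoin : JoinedIn (W ∩ U) δ.endpt p.1 := hp1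
    have hpU : p.1 ∈ U := (pathComponentIn_subset hp1).2
    have hγr : Set.range hγjoin.somePath ⊆ W ∩ U :=
      Set.range_subset_iff.mpr hγjoin.somePath_mem
    have hval : trivInv hn hG p.1 p.2 =
        SpanierSpace.mk H (β.extend (((hG.rho p.1 hpU).symm).cast hβA rfl)) := by
      rw [hp2', trivInv, dif_pos hpU, ← hβrep]
      show downRaw hG p.1 hpU β = _
      rw [downRaw, dif_pos hβA]
    have heq : SpanierSpace.mk H (δ.extend hγjoin.somePath) = trivInv hn hG p.1 p.2 := by
      rw [hval]
      refine Eq.trans (mk_extend_extend H β σ₀ hγjoin.somePath) ?_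
      refine mk_extend_eq hn hG (rel_refl H β) _ _ ?_ ?_
      · rw [Path.trans_range, cast_range, cast_range, Path.symm_range]
        exact Set.union_subset (hG.rho_range _ hu₀)
          ((hγr.trans Set.inter_subset_right))
      · rw [cast_range, Path.symm_range]
        exact hG.rho_range _ hpU
    exact basicSet_subset H Set.inter_subset_left hmem'
      ⟨p.1, hγjoin.somePath, hγr, heq.symm⟩
  baseSet := U
  open_baseSet := hG.isOpen
  source_eq := rfl
  target_eq := rfl
  proj_toFun z _ := rfl

end Main

end Sp

end

end SpanierProof

/-- If `X` is connected and locally path-connected and `H` is an open normal subgroup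
of `π₁(X,x)`, then `p : X̃ → X` is a covering map: every point of `X` has an open
neighborhood evenly covered by `p`. -/
theorem spanierProj_isCoveringMap_of_open_normal
    {X : Type*} [TopologicalSpace X] [ConnectedSpace X] [LocallyPathConnectedSpace X]
    {x : X} (H : Subgroup (FundamentalGroup X x)) (hnormal : H.Normal)
    (hopen : IsOpen {γ : Path x x | pathClass γ ∈ H}) :
    OldIsCoveringMap (spanierProj H) := by
  intro y
  have hpc : PathConnectedSpace X := pathConnectedSpace_iff_connectedSpace.mpr ‹_›
  set A : RawPath X x := ⟨(PathConnectedSpace.somePath x y).toContinuousMap,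
    (PathConnectedSpace.somePath x y).source⟩ with hAdef
  have hA : A.endpt = y := (PathConnectedSpace.somePath x y).target
  rw [← hA]
  obtain ⟨U₀, hU₀o, hU₀mem, hU₀conj⟩ := Sp.exists_conj_nbhd H hopen A
  have hG : Sp.GoodNbhd H A (pathComponentIn U₀ A.endpt) :=
    ⟨hU₀o.pathComponentIn _, mem_pathComponentIn_self hU₀mem,
      isPathConnected_pathComponentIn hU₀mem,
      fun ℓ hℓ => hU₀conj ℓ (hℓ.trans pathComponentIn_subset)⟩
  exact ⟨Sp.fiber_discrete hnormal hG, Sp.spTriv hnormal hG, hG.mem⟩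
end
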